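/- arXiv:1409.3127 — 11 statements merged into one kernel-verified Lean document; each statement's English description precedes it below -/
import Mathlib

section
/- For integers 2 ≤ n ≤ N, the N-dimensional cube I^N has exactly binomial(N, n−1) absolutely incoming (n−1)-faces, and exactly binomial(N, n−1) absolutely outgoing (n−1)-faces. -/
/-- A face of the `N`-dimensional cube `I^N`, encoded as a function assigning to each
coordinate position either a digit (`some false` = 0, `some true` = 1) or an
asterisk (`none`). -/
abbrev CubeFace (N : ℕ) := Fin N → Option Bool

/-- `τ` is a `k`-face: exactly `k` positions carry an asterisk. -/
def IsFace {N : ℕ} (k : ℕ) (τ : CubeFace N) : Prop :=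
  (Finset.filter (fun i => τ i = none) Finset.univ).card = k

/-- The digit `κ` associated to the asterisk position `p` of `f`: if `p` is the `k`-th
asterisk position of `f` (counting 1-based from the left), then `κ = 0` (i.e. `false`)
for odd `k` and `κ = 1` (i.e. `true`) for even `k`.  Equivalently, `κ` is `true` iff the
number of asterisk positions strictly before `p` is odd. -/
def kappa {N : ℕ} (f : CubeFace N) (p : Fin N) : Bool :=
  decide (Odd ((Finset.filter (fun q => q < p ∧ f q = none) Finset.univ).card))

/-- `g` is obtained from `f` by replacing the asterisk at position `p` by the digit `d`. -/
def SubfaceAt {N : ℕ} (f g : CubeFace N) (p : Fin N) (d : Bool) : Prop :=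
  f p = none ∧ g p = some d ∧ ∀ q, q ≠ p → g q = f q

/-- `g` is an incoming subface of `f`: it is obtained from `f` by replacing the asterisk
at some position `p` by the digit `κ(f, p)`. -/
def Incoming {N : ℕ} (f g : CubeFace N) : Prop := ∃ p, SubfaceAt f g p (kappa f p)

/-- `g` is an outgoing subface of `f`: it is obtained from `f` by replacing the asterisk
at some position `p` by the digit different from `κ(f, p)`. -/
def Outgoing {N : ℕ} (f g : CubeFace N) : Prop := ∃ p, SubfaceAt f g p (!kappa f p)

/-- The order of a face `g`: the number of `n`-faces of the cube for which `g` is an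
incoming subface. -/
noncomputable def faceOrder {N : ℕ} (n : ℕ) (g : CubeFace N) : ℕ :=
  Nat.card {f : CubeFace N // IsFace n f ∧ Incoming f g}

section Aux

variable {N : ℕ}

lemma kappa_congr (f g : CubeFace N) (p : Fin N)
    (h : ∀ q, q < p → f q = g q) : kappa f p = kappa g p := by
  unfold kappa
  have heq : (Finset.filter (fun q => q < p ∧ f q = none) Finset.univ)
      = (Finset.filter (fun q => q < p ∧ g q = none) Finset.univ) := by
    ext q
    simp only [Finset.mem_filter, Finset.mem_univ, true_and]
    by_cases hq : q < p
    · simp [hq, h q hq]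
    · simp [hq]
  rw [heq]

lemma subfaceAt_kappa {f g : CubeFace N} {p : Fin N} {d : Bool}
    (h : SubfaceAt f g p d) : kappa f p = kappa g p :=
  kappa_congr f g p (fun q hq => (h.2.2 q (ne_of_lt hq)).symm)

/-- `faceOrder n g` counts the digit positions carrying the "incoming" digit. -/
lemma faceOrder_eq (n : ℕ) (g : CubeFace N) (hg : IsFace (n - 1) g) (hn : 1 ≤ n) :
    faceOrder n g
      = (Finset.univ.filter (fun p => g p = some (kappa g p))).card := by
  have hupd : ∀ p : Fin N, kappa (Function.update g p none) p = kappa g p := by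
    intro p
    exact kappa_congr _ _ _ (fun q hq => Function.update_of_ne (ne_of_lt hq) _ _)
  have e : {p : Fin N // g p = some (kappa g p)}
      ≃ {f : CubeFace N // IsFace n f ∧ Incoming f g} := by
    refine Equiv.ofBijective (fun x => ⟨Function.update g x.1 none, ?_, ?_⟩) ⟨?_, ?_⟩
    · -- IsFace n
      have hne : g x.1 ≠ none := by rw [x.2]; simp
      unfold IsFace
      have hset : (Finset.univ.filter (fun i => Function.update g x.1 none i = none))
          = insert x.1 (Finset.univ.filter (fun i => g i = none)) := by
        ext i
        by_cases hi : i = x.1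
        · subst hi; simp
        · simp [Function.update_of_ne hi, hi]
      rw [hset, Finset.card_insert_of_notMem (by simp [hne]), hg]
      omega
    · -- Incoming
      refine ⟨x.1, by simp, ?_, fun q hq => (Function.update_of_ne hq _ _).symm⟩
      rw [hupd]
      exact x.2
    · -- injective
      rintro ⟨p, hp⟩ ⟨p', hp'⟩ h
      have h' := congrFun (Subtype.mk_eq_mk.mp h) p
      by_contra hne
      have hne' : p ≠ p' := fun h'' => hne (Subtype.ext h'')
      rw [Function.update_self, Function.update_of_ne hne'] at h'
      rw [hp] at h'
      exact absurd h' (by simp)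
    · -- surjective
      rintro ⟨f, hf, p, h1, h2, h3⟩
      have hk : kappa f p = kappa g p := subfaceAt_kappa ⟨h1, h2, h3⟩
      refine ⟨⟨p, by rw [h2, hk]⟩, Subtype.ext ?_⟩
      show Function.update g p none = f
      funext q
      by_cases hq : q = p
      · subst hq; simp [h1]
      · rw [Function.update_of_ne hq, h3 q hq]
  rw [faceOrder, Nat.card_congr e.symm, Nat.card_eq_fintype_card,
    Fintype.card_subtype]

lemma digits_card (k : ℕ) (g : CubeFace N) (hg : IsFace k g) :
    (Finset.univ.filter (fun p => g p ≠ none)).card = N - k := by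
  have htot := Finset.card_filter_add_card_filter_not
    (s := (Finset.univ : Finset (Fin N))) (p := fun p => g p = none)
  rw [hg] at htot
  simp only [Finset.card_univ, Fintype.card_fin, ne_eq] at htot ⊢
  have hk : k ≤ N := by
    rw [← hg]
    exact le_trans (Finset.card_filter_le _ _) (by simp)
  omega

/-- Maximal order iff every digit is the incoming one. -/
lemma order_top_iff (n : ℕ) (g : CubeFace N) (hg : IsFace (n - 1) g)
    (h2 : 2 ≤ n) (hN : n ≤ N) :
    faceOrder n g = N - n + 1 ↔ ∀ p, g p ≠ none → g p = some (kappa g p) := by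
  rw [faceOrder_eq n g hg (by omega)]
  have hsub : (Finset.univ.filter (fun p => g p = some (kappa g p)))
      ⊆ (Finset.univ.filter (fun p => g p ≠ none)) := by
    intro p hp
    simp only [Finset.mem_filter] at hp ⊢
    exact ⟨hp.1, by rw [hp.2]; simp⟩
  have hD : (Finset.univ.filter (fun p => g p ≠ none)).card = N - n + 1 := by
    rw [digits_card (n - 1) g hg]; omega
  constructor
  · intro h p hp
    have heq := Finset.eq_of_subset_of_card_le hsub (by omega)
    have : p ∈ Finset.univ.filter (fun p => g p = some (kappa g p)) := by
      rw [heq]; simp [hp]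
    simpa using this
  · intro h
    rw [← hD]
    congr 1
    apply Finset.Subset.antisymm hsub
    intro p hp
    simp only [Finset.mem_filter] at hp ⊢
    exact ⟨hp.1, h p hp.2⟩

/-- Order zero iff every digit is the outgoing one. -/
lemma order_zero_iff (n : ℕ) (g : CubeFace N) (hg : IsFace (n - 1) g)
    (h2 : 2 ≤ n) :
    faceOrder n g = 0 ↔ ∀ p, g p ≠ none → g p = some (!kappa g p) := by
  rw [faceOrder_eq n g hg (by omega), Finset.card_eq_zero,
    Finset.filter_eq_empty_iff]
  constructor
  · intro h p hp
    have hne := h (Finset.mem_univ p)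
    rcases hop : g p with _ | b
    · exact absurd hop hp
    · rw [hop] at hne
      cases b <;> cases hb : kappa g p <;> simp_all
  · intro h p _
    rcases hop : g p with _ | b
    · simp [hop]
    · have hb := h p (by simp [hop])
      rw [hop] at hb
      cases b <;> cases hk : kappa g p <;> simp_all

/-- The kappa value determined by a set of asterisk positions. -/
def kapS (S : Finset (Fin N)) (p : Fin N) : Bool :=
  decide (Odd ((S.filter (fun q => q < p)).card))

/-- The face with asterisks at `S` and digit `c (κ p)` elsewhere. -/
def gOf (c : Bool → Bool) (S : Finset (Fin N)) : CubeFace N :=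
  fun p => if p ∈ S then none else some (c (kapS S p))

lemma gOf_none_iff (c : Bool → Bool) (S : Finset (Fin N)) (p : Fin N) :
    gOf c S p = none ↔ p ∈ S := by
  unfold gOf
  by_cases hp : p ∈ S <;> simp [hp]

lemma kappa_gOf (c : Bool → Bool) (S : Finset (Fin N)) (p : Fin N) :
    kappa (gOf c S) p = kapS S p := by
  unfold kappa kapS
  have heq : (Finset.filter (fun q => q < p ∧ gOf c S q = none) Finset.univ)
      = S.filter (fun q => q < p) := by
    ext q
    simp only [Finset.mem_filter, Finset.mem_univ, true_and, gOf_none_iff]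
    tauto
  rw [heq]

lemma count_master (k : ℕ) (c : Bool → Bool) :
    Nat.card {g : CubeFace N // IsFace k g ∧
      ∀ p, g p ≠ none → g p = some (c (kappa g p))} = N.choose k := by
  have e : {S : Finset (Fin N) // S.card = k}
      ≃ {g : CubeFace N // IsFace k g ∧
          ∀ p, g p ≠ none → g p = some (c (kappa g p))} := by
    refine Equiv.ofBijective (fun S => ⟨gOf c S.1, ?_, ?_⟩) ⟨?_, ?_⟩
    · unfold IsFace
      have hset : (Finset.univ.filter (fun i => gOf c S.1 i = none)) = S.1 := by
        ext p
        simp [gOf_none_iff]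
      rw [hset, S.2]
    · intro p hp
      have hps : p ∉ S.1 := fun h => hp ((gOf_none_iff c S.1 p).mpr h)
      rw [kappa_gOf]
      simp [gOf, hps]
    · rintro ⟨S, hS⟩ ⟨S', hS'⟩ h
      have h' := Subtype.mk_eq_mk.mp h
      refine Subtype.ext (Finset.ext fun p => ?_)
      rw [← gOf_none_iff c S p, ← gOf_none_iff c S' p, h']
    · rintro ⟨g, hg, hcond⟩
      refine ⟨⟨Finset.univ.filter (fun p => g p = none), hg⟩, Subtype.ext ?_⟩
      show gOf c (Finset.univ.filter (fun p => g p = none)) = g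
      funext p
      set S := Finset.univ.filter (fun p => g p = none) with hSdef
      have hmem : p ∈ S ↔ g p = none := by simp [hSdef]
      have hkap : kapS S p = kappa g p := by
        unfold kapS kappa
        have heq : S.filter (fun q => q < p)
            = Finset.filter (fun q => q < p ∧ g q = none) Finset.univ := by
          ext q
          simp only [Finset.mem_filter, Finset.mem_univ, true_and, hSdef]
          tauto
        rw [heq]
      by_cases hp : g p = none
      · rw [hp, gOf, if_pos (hmem.mpr hp)]
      · rw [gOf, if_neg (fun h => hp (hmem.mp h)), hkap]
        exact (hcond p hp).symm
  rw [Nat.card_congr e.symm, Nat.card_eq_fintype_card, Fintype.card_finset_len,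
    Fintype.card_fin]

end Aux

/-- The `N`-cube has exactly `N.choose (n-1)` absolutely incoming `(n-1)`-faces
(those of maximal order `N - n + 1`) and exactly `N.choose (n-1)` absolutely
outgoing `(n-1)`-faces (those of order `0`). -/
theorem stmt0 (n N : ℕ) (h2 : 2 ≤ n) (hN : n ≤ N) :
    Nat.card {g : CubeFace N // IsFace (n - 1) g ∧ faceOrder n g = N - n + 1}
      = N.choose (n - 1) ∧
    Nat.card {g : CubeFace N // IsFace (n - 1) g ∧ faceOrder n g = 0}
      = N.choose (n - 1) := by
  constructor
  · rw [Nat.card_congr (Equiv.subtypeEquivRight (q := fun g : CubeFace N =>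
      IsFace (n - 1) g ∧ ∀ p, g p ≠ none → g p = some ((fun b => b) (kappa g p)))
      (fun g => by
        constructor
        · rintro ⟨h1, h2'⟩
          exact ⟨h1, (order_top_iff n g h1 h2 hN).mp h2'⟩
        · rintro ⟨h1, h2'⟩
          exact ⟨h1, (order_top_iff n g h1 h2 hN).mpr h2'⟩))]
    exact count_master (n - 1) (fun b => b)
  · rw [Nat.card_congr (Equiv.subtypeEquivRight (q := fun g : CubeFace N =>
      IsFace (n - 1) g ∧ ∀ p, g p ≠ none → g p = some ((fun b => !b) (kappa g p)))
      (fun g => by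
        constructor
        · rintro ⟨h1, h2'⟩
          exact ⟨h1, (order_zero_iff n g h1 h2).mp h2'⟩
        · rintro ⟨h1, h2'⟩
          exact ⟨h1, (order_zero_iff n g h1 h2).mpr h2'⟩))]
    exact count_master (n - 1) (fun b => !b)
end

section
/- For integers 2 ≤ n ≤ N and every subset S of {1,…,N} with exactly n−1 elements, there exists exactly one absolutely incoming (n−1)-face of I^N whose asterisk positions are exactly S, and exactly one absolutely outgoing (n−1)-face whose asterisk positions are exactly S. -/
/-- The parity bit determined by `S` at position `p`. -/
def bpar {N : ℕ} (S : Finset (Fin N)) (p : Fin N) : Bool :=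
  decide (Odd ((S.filter (· < p)).card))

lemma kappa_update {N : ℕ} (g : CubeFace N) (S : Finset (Fin N))
    (hg : Finset.filter (fun i => g i = none) Finset.univ = S) (p : Fin N) :
    kappa (Function.update g p none) p = bpar S p := by
  have hgS : ∀ q, g q = none ↔ q ∈ S := by
    intro q; rw [← hg]; simp
  have hset : Finset.filter (fun q => q < p ∧ Function.update g p none q = none)
      Finset.univ = S.filter (· < p) := by
    ext q
    simp only [Finset.mem_filter, Finset.mem_univ, true_and]
    constructor
    · rintro ⟨hq, hq2⟩
      rw [Function.update_of_ne hq.ne] at hq2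
      exact ⟨(hgS q).1 hq2, hq⟩
    · rintro ⟨hq2, hq⟩
      refine ⟨hq, ?_⟩
      rw [Function.update_of_ne hq.ne]
      exact (hgS q).2 hq2
  unfold kappa bpar
  rw [hset]

lemma order_eq {N : ℕ} (n : ℕ) (hn : 1 ≤ n) (g : CubeFace N) (S : Finset (Fin N))
    (hg : Finset.filter (fun i => g i = none) Finset.univ = S) (hS : S.card = n - 1) :
    faceOrder n g =
      (Finset.filter (fun p => p ∉ S ∧ g p = some (bpar S p)) Finset.univ).card := by
  have hgS : ∀ q, g q = none ↔ q ∈ S := by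
    intro q; rw [← hg]; simp
  have hIs : ∀ p : Fin N, p ∉ S → IsFace n (Function.update g p none) := by
    intro p hp
    have hfil : Finset.filter (fun i => Function.update g p none i = none)
        Finset.univ = insert p S := by
      ext q
      simp only [Finset.mem_filter, Finset.mem_univ, true_and, Finset.mem_insert]
      rcases eq_or_ne q p with rfl | hq
      · simp
      · rw [Function.update_of_ne hq, hgS q]; simp [hq]
    rw [IsFace, hfil, Finset.card_insert_of_notMem hp, hS]
    omega
  have hInc : ∀ p : Fin N, g p = some (bpar S p) →
      Incoming (Function.update g p none) g := by
    intro p hp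
    refine ⟨p, Function.update_self p none g, ?_, fun q hq => ?_⟩
    · rw [kappa_update g S hg p]; exact hp
    · rw [Function.update_of_ne hq]
  have key : Nat.card {p : Fin N // p ∉ S ∧ g p = some (bpar S p)} =
      Nat.card {f : CubeFace N // IsFace n f ∧ Incoming f g} := by
    refine Nat.card_eq_of_bijective
      (fun pp => ⟨Function.update g pp.1 none, hIs pp.1 pp.2.1, hInc pp.1 pp.2.2⟩)
      ⟨?_, ?_⟩
    · rintro ⟨p, hp⟩ ⟨p', hp'⟩ h
      simp only [Subtype.mk.injEq] at h
      rcases eq_or_ne p p' with rfl | hne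
      · rfl
      exfalso
      have := congrFun h p
      rw [Function.update_self, Function.update_of_ne hne] at this
      rw [hp.2] at this
      cases this
    · rintro ⟨f, hface, hinc⟩
      simp only [Incoming, SubfaceAt] at hinc
      obtain ⟨p, h1, h2, h3⟩ := hinc
      have hfeq : f = Function.update g p none := by
        funext q
        rcases eq_or_ne q p with rfl | hq
        · rw [Function.update_self, h1]
        · rw [Function.update_of_ne hq, h3 q hq]
      have hpS : p ∉ S := by
        intro hmem
        rw [(hgS p).2 hmem] at h2
        cases h2
      have hcond : g p = some (bpar S p) := by
        rw [h2]
        congr 1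
        rw [hfeq]
        exact kappa_update g S hg p
      exact ⟨⟨p, hpS, hcond⟩, by simp only [Subtype.mk.injEq]; exact hfeq.symm⟩
  rw [faceOrder, ← key, Nat.card_eq_fintype_card, Fintype.card_subtype]

/-- For every set `S` of `n-1` coordinate positions, there is exactly one absolutely
incoming `(n-1)`-face of `I^N` whose asterisk positions are exactly `S`, and exactly one
absolutely outgoing `(n-1)`-face whose asterisk positions are exactly `S`. -/
theorem stmt1 (n N : ℕ) (h2 : 2 ≤ n) (hN : n ≤ N)
    (S : Finset (Fin N)) (hS : S.card = n - 1) :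
    (∃! g : CubeFace N,
      (Finset.filter (fun i => g i = none) Finset.univ) = S ∧
      IsFace (n - 1) g ∧ faceOrder n g = N - n + 1) ∧
    (∃! g : CubeFace N,
      (Finset.filter (fun i => g i = none) Finset.univ) = S ∧
      IsFace (n - 1) g ∧ faceOrder n g = 0) := by
  have hn1 : 1 ≤ n := by omega
  have hcompl : Sᶜ.card = N - n + 1 := by
    rw [Finset.card_compl, hS, Fintype.card_fin]
    omega
  constructor
  · -- absolutely incoming
    refine ⟨fun i => if i ∈ S then none else some (bpar S i), ⟨?_, ?_, ?_⟩, ?_⟩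
    case _ =>
      ext q
      simp only [Finset.mem_filter, Finset.mem_univ, true_and]
      by_cases hq : q ∈ S <;> simp [hq]
    case _ =>
      rw [IsFace]
      have : Finset.filter
          (fun i => (if i ∈ S then none else some (bpar S i)) = none)
          Finset.univ = S := by
        ext q
        simp only [Finset.mem_filter, Finset.mem_univ, true_and]
        by_cases hq : q ∈ S <;> simp [hq]
      rw [this, hS]
    case _ =>
      have hg : Finset.filter
          (fun i => (if i ∈ S then none else some (bpar S i)) = none)
          Finset.univ = S := by
        ext q
        simp only [Finset.mem_filter, Finset.mem_univ, true_and]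
        by_cases hq : q ∈ S <;> simp [hq]
      rw [order_eq n hn1 _ S hg hS]
      have : Finset.filter
          (fun p => p ∉ S ∧ (if p ∈ S then none else some (bpar S p)) = some (bpar S p))
          Finset.univ = Sᶜ := by
        ext q
        simp only [Finset.mem_filter, Finset.mem_univ, true_and, Finset.mem_compl]
        by_cases hq : q ∈ S <;> simp [hq]
      rw [this, hcompl]
    · rintro g ⟨hg, _, horder⟩
      have hgS : ∀ q, g q = none ↔ q ∈ S := by
        intro q; rw [← hg]; simp
      rw [order_eq n hn1 g S hg hS] at horder
      have hsub : Finset.filter (fun p => p ∉ S ∧ g p = some (bpar S p)) Finset.univ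
          ⊆ Sᶜ := by
        intro q hq
        simp only [Finset.mem_filter, Finset.mem_univ, true_and] at hq
        simpa using hq.1
      have heq : Finset.filter (fun p => p ∉ S ∧ g p = some (bpar S p)) Finset.univ
          = Sᶜ :=
        Finset.eq_of_subset_of_card_le hsub (by rw [hcompl, horder])
      funext q
      by_cases hq : q ∈ S
      · rw [(hgS q).2 hq, if_pos hq]
      · have : q ∈ Finset.filter (fun p => p ∉ S ∧ g p = some (bpar S p))
            Finset.univ := by
          rw [heq]; simpa using hq
        simp only [Finset.mem_filter, Finset.mem_univ, true_and] at this
        rw [this.2, if_neg hq]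
  · -- absolutely outgoing
    refine ⟨fun i => if i ∈ S then none else some (!bpar S i), ⟨?_, ?_, ?_⟩, ?_⟩
    case _ =>
      ext q
      simp only [Finset.mem_filter, Finset.mem_univ, true_and]
      by_cases hq : q ∈ S <;> simp [hq]
    case _ =>
      rw [IsFace]
      have : Finset.filter
          (fun i => (if i ∈ S then none else some (!bpar S i)) = none)
          Finset.univ = S := by
        ext q
        simp only [Finset.mem_filter, Finset.mem_univ, true_and]
        by_cases hq : q ∈ S <;> simp [hq]
      rw [this, hS]
    case _ =>
      have hg : Finset.filter
          (fun i => (if i ∈ S then none else some (!bpar S i)) = none)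
          Finset.univ = S := by
        ext q
        simp only [Finset.mem_filter, Finset.mem_univ, true_and]
        by_cases hq : q ∈ S <;> simp [hq]
      rw [order_eq n hn1 _ S hg hS]
      have : Finset.filter
          (fun p => p ∉ S ∧
            (if p ∈ S then none else some (!bpar S p)) = some (bpar S p))
          Finset.univ = ∅ := by
        ext q
        simp only [Finset.mem_filter, Finset.mem_univ, true_and,
          Finset.notMem_empty, iff_false, not_and]
        intro hq
        rw [if_neg hq]
        simp
      rw [this, Finset.card_empty]
    · rintro g ⟨hg, _, horder⟩
      have hgS : ∀ q, g q = none ↔ q ∈ S := by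
        intro q; rw [← hg]; simp
      rw [order_eq n hn1 g S hg hS] at horder
      rw [Finset.card_eq_zero] at horder
      funext q
      by_cases hq : q ∈ S
      · rw [(hgS q).2 hq, if_pos hq]
      · rw [if_neg hq]
        obtain ⟨b, hb⟩ : ∃ b, g q = some b := by
          rcases h : g q with _ | b
          · exact absurd ((hgS q).1 h) hq
          · exact ⟨b, rfl⟩
        have hne : b ≠ bpar S q := by
          intro hbe
          have : q ∈ Finset.filter (fun p => p ∉ S ∧ g p = some (bpar S p))
              Finset.univ := by
            simp only [Finset.mem_filter, Finset.mem_univ, true_and]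
            exact ⟨hq, by rw [hb, hbe]⟩
          rw [horder] at this
          exact absurd this (Finset.notMem_empty q)
        rw [hb]
        congr 1
        cases b <;> cases hbp : bpar S q <;> simp_all
end

section
/- Fix n ≥ 2 and, for 1 ≤ i ≤ n+1, let L_i be the n-face of the (n+1)-cube I^{n+1} whose digit at position i is 0 if i is odd and 1 if i is even, with asterisks at all other positions. Then for all 1 ≤ i < j ≤ n+1, the intersection L_i ∩ L_j is an (n−1)-face of I^{n+1} (the face with the two digits at positions i and j as in L_i and L_j, and asterisks elsewhere) which is an outgoing subface of L_i and an incoming subface of L_j. -/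
/-- The `n`-face `L_i` of the `(n+1)`-cube: its digit at position `i` is 0 if the
1-based position `i+1` is odd (i.e. `i` is even) and 1 if it is even, with asterisks
at all other positions. -/
def Lface (n : ℕ) (i : Fin (n + 1)) : CubeFace (n + 1) :=
  fun j => if j = i then some (decide (Odd (i : ℕ))) else none

/-- The `(n-1)`-face `L_i ∩ L_j`: digits at positions `i` and `j` as in `L_i` and `L_j`,
asterisks elsewhere. -/
def LLcap (n : ℕ) (i j : Fin (n + 1)) : CubeFace (n + 1) :=
  fun q => if q = i then some (decide (Odd (i : ℕ)))
           else if q = j then some (decide (Odd (j : ℕ))) else none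

/-- For `i < j`, the intersection `L_i ∩ L_j` is an `(n-1)`-face of `I^{n+1}` which is an
outgoing subface of `L_i` and an incoming subface of `L_j`. -/
theorem stmt2 (n : ℕ) (hn : 2 ≤ n) (i j : Fin (n + 1)) (hij : i < j) :
    IsFace (n - 1) (LLcap n i j) ∧
    Outgoing (Lface n i) (LLcap n i j) ∧
    Incoming (Lface n j) (LLcap n i j) := by
  have hne : i ≠ j := ne_of_lt hij
  refine ⟨?_, ?_, ?_⟩
  · -- IsFace
    have : (Finset.filter (fun q => LLcap n i j q = none) Finset.univ)
        = Finset.univ \ {i, j} := by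
      ext q
      rw [Finset.mem_filter]
      simp only [Finset.mem_filter, Finset.mem_univ, true_and, Finset.mem_sdiff,
        Finset.mem_insert, Finset.mem_singleton, LLcap]
      by_cases h1 : q = i <;> by_cases h2 : q = j <;> simp [h1, h2, hne, hne.symm]
    rw [IsFace, this, Finset.card_sdiff_of_subset (by simp)]
    rw [Finset.card_pair hne]
    simp only [Finset.card_univ, Fintype.card_fin]
    omega
  · -- Outgoing at position j
    refine ⟨j, ?_, ?_, ?_⟩
    · simp [Lface, hne.symm]
    · have hk : kappa (Lface n i) j = decide (Odd ((j : ℕ) - 1)) := by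
        unfold kappa
        congr 1
        have : (Finset.filter (fun q => q < j ∧ Lface n i q = none) Finset.univ)
            = Finset.Iio j \ {i} := by
          ext q
          simp only [Finset.mem_filter, Finset.mem_univ, true_and, Finset.mem_sdiff,
            Finset.mem_Iio, Finset.mem_singleton, Lface]
          by_cases h1 : q = i <;> simp [h1]
        rw [this, Finset.card_sdiff_of_subset (by simp [Finset.mem_Iio, hij]), Fin.card_Iio]
        simp
      rw [hk]
      have hj1 : 1 ≤ (j : ℕ) := by
        have : (i : ℕ) < (j : ℕ) := hij
        omega
      obtain ⟨k, hkk⟩ : ∃ k, (j : ℕ) = k + 1 := ⟨(j : ℕ) - 1, by omega⟩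
      simp only [LLcap, if_neg (Ne.symm hne), if_pos rfl, hkk]
      simp [Nat.odd_add_one, decide_not, Nat.not_odd_iff_even]
      simp [← Nat.not_odd_iff_even, decide_not]
    · intro q hq
      by_cases h : q = i <;> simp [LLcap, Lface, h, hq]
  · -- Incoming at position i
    refine ⟨i, ?_, ?_, ?_⟩
    · simp [Lface, hne]
    · have hk : kappa (Lface n j) i = decide (Odd (i : ℕ)) := by
        unfold kappa
        congr 1
        have : (Finset.filter (fun q => q < i ∧ Lface n j q = none) Finset.univ)
            = Finset.Iio i := by
          ext q
          rw [Finset.mem_filter]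
          simp only [Finset.mem_filter, Finset.mem_univ, true_and, Finset.mem_Iio, Lface]
          constructor
          · rintro ⟨h, _⟩; exact h
          · intro h
            refine ⟨h, ?_⟩
            have : q ≠ j := ne_of_lt (lt_trans h hij)
            simp [this]
        rw [this, Fin.card_Iio]
      rw [hk]; simp [LLcap]
    · intro q hq
      by_cases h : q = j <;> simp [LLcap, Lface, h, hq, Ne.symm hne]
end

section
/- Fix n ≥ 2 and, for 1 ≤ i ≤ n+1, let R_i be the n-face of the (n+1)-cube I^{n+1} whose digit at position i is 1 if i is odd and 0 if i is even, with asterisks at all other positions. Then for all 1 ≤ i < j ≤ n+1, the intersection R_i ∩ R_j is an (n−1)-face of I^{n+1} which is an outgoing subface of R_j and an incoming subface of R_i. -/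
/-- The `n`-face `R_i` of the `(n+1)`-cube: its digit at position `i` is 1 if the
1-based position `i+1` is odd (i.e. `i` is even) and 0 if it is even, with asterisks
at all other positions. -/
def Rface (n : ℕ) (i : Fin (n + 1)) : CubeFace (n + 1) :=
  fun j => if j = i then some (decide (Even (i : ℕ))) else none

/-- The `(n-1)`-face `R_i ∩ R_j`: digits at positions `i` and `j` as in `R_i` and `R_j`,
asterisks elsewhere. -/
def RRcap (n : ℕ) (i j : Fin (n + 1)) : CubeFace (n + 1) :=
  fun q => if q = i then some (decide (Even (i : ℕ)))
           else if q = j then some (decide (Even (j : ℕ))) else none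

/-- For `i < j`, the intersection `R_i ∩ R_j` is an `(n-1)`-face of `I^{n+1}` which is an
outgoing subface of `R_j` and an incoming subface of `R_i`. -/
theorem stmt3 (n : ℕ) (hn : 2 ≤ n) (i j : Fin (n + 1)) (hij : i < j) :
    IsFace (n - 1) (RRcap n i j) ∧
    Outgoing (Rface n j) (RRcap n i j) ∧
    Incoming (Rface n i) (RRcap n i j) := by
  have hne : i ≠ j := ne_of_lt hij
  refine ⟨?_, ?_, ?_⟩
  · -- IsFace
    have h1 : Finset.filter (fun q => RRcap n i j q = none) Finset.univ
        = (Finset.univ : Finset (Fin (n+1))) \ {i, j} := by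
      ext q
      simp only [Finset.mem_filter, Finset.mem_univ, true_and]
      simp only [RRcap, Finset.mem_filter, Finset.mem_univ, true_and, Finset.mem_sdiff,
        Finset.mem_insert, Finset.mem_singleton]
      by_cases h : q = i <;> by_cases h' : q = j <;> simp [h, h', Ne.symm hne]
    rw [IsFace, h1, Finset.card_sdiff_of_subset (by simp)]
    rw [Finset.card_insert_of_notMem (by simpa using hne), Finset.card_singleton]
    simp only [Finset.card_univ, Fintype.card_fin]
    omega
  · -- Outgoing from R_j at position i
    refine ⟨i, ?_, ?_, ?_⟩
    · simp [Rface, hne]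
    · have hset : Finset.filter (fun q => q < i ∧ Rface n j q = none) Finset.univ
          = Finset.Iio i := by
        ext q
        have : q < i → q ≠ j := fun hq => ne_of_lt (hq.trans hij)
        simp only [Finset.mem_filter, Finset.mem_univ, true_and]
        simp only [Rface, Finset.mem_filter, Finset.mem_univ, true_and, Finset.mem_Iio]
        constructor
        · exact fun h => h.1
        · intro h; exact ⟨h, by simp [this h]⟩
      have hk : kappa (Rface n j) i = decide (Odd (i : ℕ)) := by
        rw [kappa, hset, Fin.card_Iio]
      rw [hk]
      have : (!decide (Odd (i : ℕ))) = decide (Even (i : ℕ)) := by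
        rcases Nat.even_or_odd (i : ℕ) with h | h
        · simp [h, Nat.not_odd_iff_even.mpr h]
        · simp [h, Nat.not_even_iff_odd.mpr h]
      rw [this]
      simp [RRcap]
    · intro q hq
      by_cases h' : q = j
      · subst h'; simp [RRcap, hne.symm, Rface]
      · simp [RRcap, hq, h', Rface]
  · -- Incoming to R_i at position j
    refine ⟨j, ?_, ?_, ?_⟩
    · simp [Rface, hne.symm]
    · have hset : Finset.filter (fun q => q < j ∧ Rface n i q = none) Finset.univ
          = Finset.Iio j \ {i} := by
        ext q
        simp only [Finset.mem_filter, Finset.mem_univ, true_and]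
        simp only [Rface, Finset.mem_filter, Finset.mem_univ, true_and, Finset.mem_sdiff,
          Finset.mem_Iio, Finset.mem_singleton]
        constructor
        · rintro ⟨h1, h2⟩
          refine ⟨h1, fun h => by simp [h] at h2⟩
        · rintro ⟨h1, h2⟩
          exact ⟨h1, by simp [h2]⟩
      have hcard : (Finset.Iio j \ {i}).card = (j : ℕ) - 1 := by
        rw [Finset.card_sdiff_of_subset (by simpa using hij), Fin.card_Iio, Finset.card_singleton]
      have hk : kappa (Rface n i) j = decide (Odd ((j : ℕ) - 1)) := by
        rw [kappa, hset, hcard]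
      have hj1 : 1 ≤ (j : ℕ) := by
        have : (i : ℕ) < (j : ℕ) := hij
        omega
      have : decide (Odd ((j : ℕ) - 1)) = decide (Even (j : ℕ)) := by
        rw [decide_eq_decide, Nat.odd_iff, Nat.even_iff]
        omega
      rw [hk, this]
      simp [RRcap, hne.symm]
    · intro q hq
      by_cases h' : q = i
      · subst h'; simp [RRcap, Rface, hq]
      · simp [RRcap, hq, h', Rface]
end

section
/- For integers 2 ≤ n ≤ N, the directed graph Γ_N is acyclic: it contains no nonempty directed cycle. -/
/-- The edge relation of the directed graph `Γ_N`: its vertices are the `n`-faces and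
`(n-1)`-faces of `I^N`; there is an edge directed from an `(n-1)`-face `g` to an
`n`-face `f` if `g` is an incoming subface of `f`, and an edge directed from `f` to `g`
if `g` is an outgoing subface of `f`. -/
def GammaEdge {N : ℕ} (n : ℕ) (a b : CubeFace N) : Prop :=
  (IsFace (n - 1) a ∧ IsFace n b ∧ Incoming b a) ∨
  (IsFace n a ∧ IsFace (n - 1) b ∧ Outgoing a b)

namespace Stmt6Aux

lemma two_geom (c : ℕ) : 2 * ∑ k ∈ Finset.range c, (3:ℤ)^k + 1 = 3^c := by
  induction c with
  | zero => simp
  | succ c ih =>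
    rw [Finset.sum_range_succ, pow_succ]
    linarith

lemma sum_geom (N : ℕ) (p : Fin N) :
    ∑ i ∈ Finset.univ.filter (fun i : Fin N => p < i), 2*(3:ℤ)^(N-1-i.val) + 1
      = 3^(N-1-p.val) := by
  have hp : p.val < N := p.isLt
  rw [Finset.sum_filter]
  have h1 : (∑ a : Fin N, if p < a then 2*(3:ℤ)^(N-1-a.val) else 0)
      = ∑ j ∈ Finset.range N, if p.val < j then 2*(3:ℤ)^(N-1-j) else 0 := by
    rw [← Fin.sum_univ_eq_sum_range (fun j => if p.val < j then 2*(3:ℤ)^(N-1-j) else 0)]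
    exact Finset.sum_congr rfl (fun a _ => by simp only [Fin.lt_def])
  rw [h1, ← Finset.sum_range_reflect]
  have h2 : ∀ j ∈ Finset.range N,
      (if p.val < N - 1 - j then 2*(3:ℤ)^(N-1-(N-1-j)) else 0)
        = (if j < N - 1 - p.val then 2*(3:ℤ)^j else 0) := by
    intro j hj
    rw [Finset.mem_range] at hj
    have e1 : N - 1 - (N - 1 - j) = j := by omega
    rw [e1]
    split_ifs with ha hb
    · rfl
    · exfalso; omega
    · exfalso; omega
    · rfl
  rw [Finset.sum_congr rfl h2]
  have h3 : ∑ j ∈ Finset.range (N - 1 - p.val), 2*(3:ℤ)^j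
      = ∑ j ∈ Finset.range N, (if j < N - 1 - p.val then 2*(3:ℤ)^j else 0) := by
    rw [← Finset.sum_subset (Finset.range_subset_range.mpr (by omega : N - 1 - p.val ≤ N))
      (fun j _ hj => by rw [Finset.mem_range] at hj; simp [hj])]
    exact Finset.sum_congr rfl (fun j hj => by rw [Finset.mem_range] at hj; simp [hj])
  rw [← h3, ← Finset.mul_sum]
  exact two_geom _


variable {N : ℕ}

noncomputable def contrib (f : CubeFace N) (i : Fin N) : ℤ :=
  match f i with
  | none => 0
  | some d => (if d = kappa f i then 1 else -1) * 3 ^ (N - 1 - i.val)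

noncomputable def phi (f : CubeFace N) : ℤ := ∑ i, contrib f i

lemma contrib_abs_le (f : CubeFace N) (i : Fin N) :
    |contrib f i| ≤ 3 ^ (N - 1 - i.val) := by
  unfold contrib
  match h : f i with
  | none => simp
  | some d =>
    by_cases hd : d = kappa f i <;> simp [hd]

variable {f g : CubeFace N} {p : Fin N} {d : Bool}

lemma kappa_eq_of_le (h : SubfaceAt f g p d) {i : Fin N} (hi : i ≤ p) :
    kappa g i = kappa f i := by
  have hset : Finset.filter (fun q => q < i ∧ g q = none) Finset.univ
      = Finset.filter (fun q => q < i ∧ f q = none) Finset.univ := by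
    apply Finset.filter_congr
    intro q _
    constructor
    · rintro ⟨h1, h2⟩
      exact ⟨h1, by rw [← h.2.2 q (by intro e; subst e; exact absurd (lt_of_lt_of_le h1 hi) (lt_irrefl q)), h2]⟩
    · rintro ⟨h1, h2⟩
      exact ⟨h1, by rw [h.2.2 q (by intro e; subst e; exact absurd (lt_of_lt_of_le h1 hi) (lt_irrefl q)), h2]⟩
  unfold kappa
  rw [hset]

lemma card_succ_of_gt (h : SubfaceAt f g p d) {i : Fin N} (hi : p < i) :
    (Finset.filter (fun q => q < i ∧ f q = none) Finset.univ).card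
      = (Finset.filter (fun q => q < i ∧ g q = none) Finset.univ).card + 1 := by
  have hset : Finset.filter (fun q => q < i ∧ f q = none) Finset.univ
      = insert p (Finset.filter (fun q => q < i ∧ g q = none) Finset.univ) := by
    ext q
    simp only [Finset.mem_filter, Finset.mem_univ, true_and, Finset.mem_insert]
    constructor
    · rintro ⟨h1, h2⟩
      by_cases hq : q = p
      · exact Or.inl hq
      · exact Or.inr ⟨h1, by rw [h.2.2 q hq]; exact h2⟩
    · rintro (hq | ⟨h1, h2⟩)
      · subst hq; exact ⟨hi, h.1⟩
      · by_cases hq : q = p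
        · subst hq; exact ⟨hi, h.1⟩
        · exact ⟨h1, by rw [← h.2.2 q hq]; exact h2⟩
  rw [hset, Finset.card_insert_of_notMem]
  simp only [Finset.mem_filter, Finset.mem_univ, true_and, not_and]
  intro _
  rw [h.2.1]; simp

lemma kappa_flip (h : SubfaceAt f g p d) {i : Fin N} (hi : p < i) :
    kappa f i = !kappa g i := by
  unfold kappa
  rw [card_succ_of_gt h hi]
  simp [Nat.odd_add_one, ← Nat.not_odd_iff_even, decide_not]

lemma contrib_eq_of_lt (h : SubfaceAt f g p d) {i : Fin N} (hi : i < p) :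
    contrib g i = contrib f i := by
  unfold contrib
  rw [h.2.2 i (ne_of_lt hi), kappa_eq_of_le h (le_of_lt hi)]

lemma contrib_at (h : SubfaceAt f g p d) :
    contrib g p = (if d = kappa f p then 1 else -1) * 3 ^ (N - 1 - p.val) := by
  unfold contrib
  rw [h.2.1, kappa_eq_of_le h (le_refl p)]

lemma contrib_f_at (h : SubfaceAt f g p d) : contrib f p = 0 := by
  unfold contrib; rw [h.1]

lemma contrib_neg_of_gt (h : SubfaceAt f g p d) {i : Fin N} (hi : p < i) :
    contrib g i = - contrib f i := by
  unfold contrib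
  rw [h.2.2 i (ne_of_gt hi), kappa_flip h hi]
  match hfi : f i with
  | none => simp
  | some e =>
    cases e <;> cases hge : kappa g i <;> simp


lemma phi_diff (h : SubfaceAt f g p d) :
    phi g - phi f = (if d = kappa f p then 1 else -1) * 3 ^ (N - 1 - p.val)
      - 2 * ∑ i ∈ Finset.univ.filter (fun i : Fin N => p < i), contrib f i := by
  unfold phi
  rw [← Finset.sum_sub_distrib]
  rw [← Finset.sum_filter_add_sum_filter_not Finset.univ (fun i : Fin N => p < i)]
  have hA : ∑ i ∈ Finset.univ.filter (fun i : Fin N => p < i),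
      (contrib g i - contrib f i)
      = - 2 * ∑ i ∈ Finset.univ.filter (fun i : Fin N => p < i), contrib f i := by
    rw [Finset.mul_sum]
    apply Finset.sum_congr rfl
    intro i hi
    rw [Finset.mem_filter] at hi
    rw [contrib_neg_of_gt h hi.2]
    ring
  have hB : ∑ i ∈ Finset.univ.filter (fun i : Fin N => ¬ p < i),
      (contrib g i - contrib f i)
      = (if d = kappa f p then 1 else -1) * 3 ^ (N - 1 - p.val) := by
    rw [Finset.sum_eq_single_of_mem p
      (by simp only [Finset.mem_filter, Finset.mem_univ, true_and]; exact lt_irrefl p)]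
    · rw [contrib_at h, contrib_f_at h]; ring
    · intro i hi hne
      rw [Finset.mem_filter] at hi
      have : i < p := lt_of_le_of_ne (not_lt.mp hi.2) hne
      rw [contrib_eq_of_lt h this]
      ring
  rw [hA, hB]
  ring

lemma abs_sum_le (h : SubfaceAt f g p d) :
    2 * |∑ i ∈ Finset.univ.filter (fun i : Fin N => p < i), contrib f i| + 1
      ≤ 3 ^ (N - 1 - p.val) := by
  rw [← sum_geom N p]
  have h1 : |∑ i ∈ Finset.univ.filter (fun i : Fin N => p < i), contrib f i|
      ≤ ∑ i ∈ Finset.univ.filter (fun i : Fin N => p < i), (3:ℤ) ^ (N - 1 - i.val) :=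
    (Finset.abs_sum_le_sum_abs _ _).trans
      (Finset.sum_le_sum (fun i _ => contrib_abs_le f i))
  have h2 : ∑ i ∈ Finset.univ.filter (fun i : Fin N => p < i), 2*(3:ℤ)^(N-1-i.val)
      = 2 * ∑ i ∈ Finset.univ.filter (fun i : Fin N => p < i), (3:ℤ)^(N-1-i.val) := by
    rw [Finset.mul_sum]
  rw [h2]
  linarith

lemma phi_lt_incoming (h : SubfaceAt f g p (kappa f p)) : phi f < phi g := by
  have hd := phi_diff h
  have ha := abs_sum_le h
  simp only [eq_self_iff_true, if_true, one_mul] at hd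
  have := abs_le.mp (le_refl |∑ i ∈ Finset.univ.filter (fun i : Fin N => p < i), contrib f i|)
  linarith [this.1, this.2]

lemma phi_lt_outgoing (h : SubfaceAt f g p (!kappa f p)) : phi g < phi f := by
  have hd := phi_diff h
  have ha := abs_sum_le h
  rw [if_neg (by simp)] at hd
  have := abs_le.mp (le_refl |∑ i ∈ Finset.univ.filter (fun i : Fin N => p < i), contrib f i|)
  linarith [this.1, this.2]


lemma phi_lt_of_edge {n : ℕ} {a b : CubeFace N} (h : GammaEdge n a b) :
    phi b < phi a := by
  rcases h with ⟨-, -, ⟨p, hp⟩⟩ | ⟨-, -, ⟨p, hp⟩⟩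
  · exact phi_lt_incoming hp
  · exact phi_lt_outgoing hp

end Stmt6Aux

/-- The directed graph `Γ_N` is acyclic: there is no nonempty directed cycle. -/
theorem stmt6 (n N : ℕ) (h2 : 2 ≤ n) (hN : n ≤ N) :
    ∀ a : CubeFace N, ¬ Relation.TransGen (GammaEdge n) a a := by
  intro a h
  have : Stmt6Aux.phi a < Stmt6Aux.phi a := by
    have key : ∀ b : CubeFace N, Relation.TransGen (GammaEdge n) a b →
        Stmt6Aux.phi b < Stmt6Aux.phi a := by
      intro b hb
      induction hb with
      | single h => exact Stmt6Aux.phi_lt_of_edge h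
      | tail _ h ih => exact lt_trans (Stmt6Aux.phi_lt_of_edge h) ih
    exact key a h
  exact lt_irrefl _ this
end

section
/- Let n ≥ 2, let X be a finite set, and let R : X^n → X^n satisfy the set-theoretic n-simplex equation, formulated as: every map from the set of absolutely incoming (n−1)-faces of I^{n+1} to X extends to a permitted coloring of I^{n+1}. Then for every N ≥ n, the restriction map sending a permitted coloring of I^N to its restriction to the absolutely incoming (n−1)-faces is a bijection onto the set of all maps from the absolutely incoming (n−1)-faces of I^N to X; in particular, the number of permitted colorings of I^N equals |X|^{binomial(N, n−1)}. -/
/-- The subtype of `k`-faces of `I^N`. -/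
def FaceT (N k : ℕ) := {τ : CubeFace N // IsFace k τ}

/-- The incoming subface of an `n`-face `f` obtained by replacing the asterisk at
position `p` by the digit `κ(f, p)`. -/
def inAt {N : ℕ} (f : CubeFace N) (p : Fin N) : CubeFace N :=
  fun q => if q = p then some (kappa f p) else f q

/-- The outgoing subface of an `n`-face `f` obtained by replacing the asterisk at
position `p` by the digit different from `κ(f, p)`. -/
def outAt {N : ℕ} (f : CubeFace N) (p : Fin N) : CubeFace N :=
  fun q => if q = p then some (!kappa f p) else f q

/-- A coloring `c` of the `(n-1)`-faces of `I^N` is permitted with respect to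
`R : Xⁿ → Xⁿ` if for every `n`-face `f`, with asterisk positions enumerated in
increasing order by `p : Fin n → Fin N`, the colors of the outgoing `(n-1)`-subfaces
(listed in increasing order of the replaced asterisk position) are the image under `R`
of the colors of the incoming `(n-1)`-subfaces (listed likewise). -/
def Permitted {N n : ℕ} {X : Type*} (R : (Fin n → X) → (Fin n → X))
    (c : FaceT N (n - 1) → X) : Prop :=
  ∀ f : CubeFace N, IsFace n f →
    ∀ p : Fin n → Fin N, StrictMono p → (∀ k, f (p k) = none) →
      ∀ gIn gOut : Fin n → FaceT N (n - 1),
        (∀ k, (gIn k).1 = inAt f (p k)) → (∀ k, (gOut k).1 = outAt f (p k)) →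
        (fun k => c (gOut k)) = R (fun k => c (gIn k))

/-- The absolutely incoming `(n-1)`-faces of `I^N`: those of maximal order `N - n + 1`. -/
def AbsIn (N n : ℕ) := {g : FaceT N (n - 1) // faceOrder n g.1 = N - n + 1}

/-- Restriction of a coloring to the absolutely incoming `(n-1)`-faces. -/
def resAbs {N n : ℕ} {X : Type*} (c : FaceT N (n - 1) → X) : AbsIn N n → X :=
  fun g => c g.1

namespace SQ
open Finset

variable {N : ℕ}

/-- number of asterisks strictly below `i` -/
def below (f : CubeFace N) (i : Fin N) : ℕ :=
  (Finset.filter (fun q => q < i ∧ f q = none) Finset.univ).card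

lemma kappa_eq (f : CubeFace N) (i : Fin N) : kappa f i = decide (Odd (below f i)) := rfl

lemma below_congr {f g : CubeFace N} {i : Fin N}
    (h : ∀ q, q < i → (f q = none ↔ g q = none)) : below f i = below g i := by
  unfold below
  congr 1
  apply Finset.filter_congr
  exact fun q _ => and_congr_right (h q)

lemma kappa_congr {f g : CubeFace N} {i : Fin N}
    (h : ∀ q, q < i → (f q = none ↔ g q = none)) : kappa f i = kappa g i := by
  rw [kappa_eq, kappa_eq, below_congr h]

/-- replace position `p` by digit `d` -/
def setD (f : CubeFace N) (p : Fin N) (d : Bool) : CubeFace N :=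
  fun q => if q = p then some d else f q

lemma inAt_eq (f : CubeFace N) (p : Fin N) : inAt f p = setD f p (kappa f p) := rfl
lemma outAt_eq (f : CubeFace N) (p : Fin N) : outAt f p = setD f p (!kappa f p) := rfl

/-- replace position `p` by an asterisk -/
def starAt (f : CubeFace N) (p : Fin N) : CubeFace N :=
  fun q => if q = p then none else f q

@[simp] lemma setD_self (f : CubeFace N) (p d) : setD f p d p = some d := by simp [setD]
@[simp] lemma starAt_self (f : CubeFace N) (p) : starAt f p p = none := by simp [starAt]
lemma setD_ne (f : CubeFace N) {p q} (h : q ≠ p) (d) : setD f p d q = f q := by simp [setD, h]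
lemma starAt_ne (f : CubeFace N) {p q} (h : q ≠ p) : starAt f p q = f q := by simp [starAt, h]

lemma below_setD_of_le {f : CubeFace N} {p i : Fin N} (h : i ≤ p) (d) :
    below (setD f p d) i = below f i :=
  below_congr fun q hq => by rw [setD_ne _ (by exact ne_of_lt (lt_of_lt_of_le hq h))]

lemma kappa_setD_of_le {f : CubeFace N} {p i : Fin N} (h : i ≤ p) (d) :
    kappa (setD f p d) i = kappa f i := by
  rw [kappa_eq, kappa_eq, below_setD_of_le h]

lemma below_setD_add_one {f : CubeFace N} {p i : Fin N} (hp : f p = none) (h : p < i) (d) :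
    below (setD f p d) i + 1 = below f i := by
  unfold below
  have hset : (Finset.filter (fun q => q < i ∧ setD f p d q = none) Finset.univ)
      = (Finset.filter (fun q => q < i ∧ f q = none) Finset.univ).erase p := by
    ext q
    by_cases hq : q = p
    · subst hq; simp [setD_self]
    · simp [Finset.mem_erase, hq, setD_ne _ hq]
  rw [hset, Finset.card_erase_of_mem (by simp [h, hp])]
  have : 0 < (Finset.filter (fun q => q < i ∧ f q = none) Finset.univ).card :=
    Finset.card_pos.mpr ⟨p, by simp [h, hp]⟩
  omega

lemma decide_odd_succ (m : ℕ) : decide (Odd (m + 1)) = !decide (Odd m) := by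
  rw [← decide_not, decide_eq_decide]
  exact Nat.odd_add_one

lemma kappa_setD_of_lt {f : CubeFace N} {p i : Fin N} (hp : f p = none) (h : p < i) (d) :
    kappa (setD f p d) i = !kappa f i := by
  rw [kappa_eq, kappa_eq, ← below_setD_add_one hp h d, decide_odd_succ, Bool.not_not]

lemma below_starAt_of_le {f : CubeFace N} {p i : Fin N} (h : i ≤ p) :
    below (starAt f p) i = below f i :=
  below_congr fun q hq => by rw [starAt_ne _ (by exact ne_of_lt (lt_of_lt_of_le hq h))]

lemma kappa_starAt_of_le {f : CubeFace N} {p i : Fin N} (h : i ≤ p) :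
    kappa (starAt f p) i = kappa f i := by
  rw [kappa_eq, kappa_eq, below_starAt_of_le h]

lemma below_starAt_of_lt {f : CubeFace N} {p i : Fin N} (hp : f p ≠ none) (h : p < i) :
    below (starAt f p) i = below f i + 1 := by
  unfold below
  have hset : (Finset.filter (fun q => q < i ∧ starAt f p q = none) Finset.univ)
      = insert p (Finset.filter (fun q => q < i ∧ f q = none) Finset.univ) := by
    ext q
    by_cases hq : q = p
    · subst hq; simp [h, hp]
    · simp [hq, starAt_ne _ hq]
  rw [hset, Finset.card_insert_of_notMem (by simp [hp])]

lemma kappa_starAt_of_lt {f : CubeFace N} {p i : Fin N} (hp : f p ≠ none) (h : p < i) :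
    kappa (starAt f p) i = !kappa f i := by
  rw [kappa_eq, kappa_eq, below_starAt_of_lt hp h, decide_odd_succ]

/-- weight of a position: asterisk 1, correct digit 0, wrong digit 2 -/
def wt (g : CubeFace N) (i : Fin N) : ℕ :=
  if g i = none then 1 else if g i = some (kappa g i) then 0 else 2

lemma wt_le (g : CubeFace N) (i : Fin N) : wt g i ≤ 2 := by
  unfold wt; split <;> [omega; split <;> omega]

lemma wt_congr {g g' : CubeFace N} (i : Fin N) (hv : g i = g' i)
    (hk : kappa g i = kappa g' i) : wt g i = wt g' i := by
  unfold wt; rw [hv, hk]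

/-- the potential function -/
def phi (g : CubeFace N) : ℕ := ∑ i : Fin N, wt g i * 3 ^ (i : ℕ)

lemma two_geom (m : ℕ) : (∑ j ∈ Finset.range m, 2 * 3 ^ j) + 1 = 3 ^ m := by
  induction m with
  | zero => simp
  | succ m ih => rw [Finset.sum_range_succ, pow_succ]; omega

lemma sum_lt_pow (w : Fin N → ℕ) (hw : ∀ i, w i ≤ 2) (m : Fin N) :
    ∑ i ∈ Finset.univ.filter (fun i => i < m), w i * 3 ^ (i : ℕ) < 3 ^ (m : ℕ) := by
  have h1 : ∑ i ∈ Finset.univ.filter (fun i => i < m), w i * 3 ^ (i : ℕ)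
      ≤ ∑ i ∈ Finset.univ.filter (fun i => i < m), 2 * 3 ^ (i : ℕ) :=
    Finset.sum_le_sum fun i _ => Nat.mul_le_mul_right _ (hw i)
  have h2 : ∑ i ∈ Finset.univ.filter (fun i => i < m), 2 * 3 ^ (i : ℕ)
      = ∑ j ∈ (Finset.univ.filter (fun i : Fin N => i < m)).image Fin.val, 2 * 3 ^ j :=
    (Finset.sum_image (f := fun j => 2 * 3 ^ j) (g := Fin.val)
      (fun x _ y _ h => Fin.val_injective h)).symm
  have h3 : (Finset.univ.filter (fun i : Fin N => i < m)).image Fin.val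
      ⊆ Finset.range (m : ℕ) := by
    intro j hj
    rcases Finset.mem_image.mp hj with ⟨a, ha, rfl⟩
    exact Finset.mem_range.mpr (Finset.mem_filter.mp ha).2
  have h4 : ∑ j ∈ (Finset.univ.filter (fun i : Fin N => i < m)).image Fin.val, 2 * 3 ^ j
      ≤ ∑ j ∈ Finset.range (m : ℕ), 2 * 3 ^ j := Finset.sum_le_sum_of_subset h3
  have h5 := two_geom (m : ℕ)
  omega

lemma sum_split (w : Fin N → ℕ) (m : Fin N) :
    ∑ i : Fin N, w i = (∑ i ∈ Finset.univ.filter (fun i => i < m), w i) + w m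
      + ∑ i ∈ Finset.univ.filter (fun i => m < i), w i := by
  rw [← Finset.sum_filter_add_sum_filter_not Finset.univ (fun i => i < m) w, add_assoc]
  congr 1
  have : Finset.univ.filter (fun i : Fin N => ¬ i < m)
      = insert m (Finset.univ.filter (fun i => m < i)) := by
    ext i
    simp only [Finset.mem_filter, Finset.mem_univ, true_and, not_lt, Finset.mem_insert]
    constructor
    · intro h; rcases eq_or_lt_of_le h with h | h
      · exact Or.inl h.symm
      · exact Or.inr (by simpa using h)
    · rintro (rfl | h); · exact le_refl _
      · exact le_of_lt h
  rw [this, Finset.sum_insert (by simp)]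

lemma phi_lt_of_dom {g g' : CubeFace N} (m : Fin N) (h1 : wt g m < wt g' m)
    (h2 : ∀ i, m < i → wt g i = wt g' i) : phi g < phi g' := by
  unfold phi
  rw [sum_split (fun i => wt g i * 3 ^ (i : ℕ)) m, sum_split (fun i => wt g' i * 3 ^ (i : ℕ)) m]
  have e2 : ∑ i ∈ Finset.univ.filter (fun i => m < i), wt g i * 3 ^ (i : ℕ)
      = ∑ i ∈ Finset.univ.filter (fun i => m < i), wt g' i * 3 ^ (i : ℕ) := by
    apply Finset.sum_congr rfl
    intro i hi
    rw [h2 i (Finset.mem_filter.mp hi).2]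
  rw [e2]
  have hb := sum_lt_pow (fun i => wt g i) (fun i => wt_le g i) m
  have hmul : wt g m * 3 ^ (m : ℕ) + 3 ^ (m : ℕ) ≤ wt g' m * 3 ^ (m : ℕ) := by
    have hstep : (wt g m + 1) * 3 ^ (m : ℕ) ≤ wt g' m * 3 ^ (m : ℕ) :=
      Nat.mul_le_mul_right (k := 3 ^ (m : ℕ)) (Nat.succ_le_of_lt h1)
    rw [add_mul, one_mul] at hstep
    exact hstep
  have hpos : 0 ≤ ∑ i ∈ Finset.univ.filter (fun i => i < m), wt g' i * 3 ^ (i : ℕ) := Nat.zero_le _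
  omega

end SQ
namespace SQ
open Finset

variable {N : ℕ}

lemma phi_in_lt_out {f : CubeFace N} {p r : Fin N} (hp : f p = none) (hr : f r = none) :
    phi (inAt f r) < phi (outAt f p) := by
  rw [inAt_eq, outAt_eq]
  set gi := setD f r (kappa f r) with hgi
  set go := setD f p (!kappa f p) with hgo
  have hgo_p : wt go p = 2 := by
    have hv : go p = some (!kappa f p) := setD_self f p _
    have hk : kappa go p = kappa f p := kappa_setD_of_le le_rfl _
    unfold wt
    rw [hv, hk]
    simp
  have habove : ∀ i, p < i → r < i → wt gi i = wt go i := by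
    intro i hpi hri
    apply wt_congr
    · rw [hgi, hgo, setD_ne _ (ne_of_gt hri), setD_ne _ (ne_of_gt hpi)]
    · rw [hgi, hgo, kappa_setD_of_lt hr hri, kappa_setD_of_lt hp hpi]
  rcases lt_trichotomy p r with h | h | h
  · apply phi_lt_of_dom r
    · have h1 : wt gi r = 0 := by
        have hv : gi r = some (kappa f r) := setD_self f r _
        have hk : kappa gi r = kappa f r := kappa_setD_of_le le_rfl _
        unfold wt
        rw [hv, hk]
        simp
      have h2 : wt go r = 1 := by
        have hv : go r = none := by rw [hgo, setD_ne _ (ne_of_gt h)]; exact hr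
        unfold wt
        rw [hv]
        simp
      omega
    · intro i hi; exact habove i (lt_trans h hi) hi
  · subst h
    apply phi_lt_of_dom p
    · have h1 : wt gi p = 0 := by
        have hv : gi p = some (kappa f p) := setD_self f p _
        have hk : kappa gi p = kappa f p := kappa_setD_of_le le_rfl _
        unfold wt
        rw [hv, hk]
        simp
      omega
    · intro i hi; exact habove i hi hi
  · apply phi_lt_of_dom p
    · have h1 : wt gi p = 1 := by
        have hv : gi p = none := by rw [hgi, setD_ne _ (ne_of_gt h)]; exact hp
        unfold wt
        rw [hv]
        simp
      omega
    · intro i hi; exact habove i hi (lt_trans h hi)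

/-- the set of asterisk positions -/
def asts (f : CubeFace N) : Finset (Fin N) :=
  Finset.univ.filter (fun q => f q = none)

lemma mem_asts {f : CubeFace N} {q : Fin N} : q ∈ asts f ↔ f q = none := by simp [asts]

lemma isFace_iff {k : ℕ} {f : CubeFace N} : IsFace k f ↔ (asts f).card = k := Iff.rfl

lemma asts_setD {f : CubeFace N} (p : Fin N) (d : Bool) :
    asts (setD f p d) = (asts f).erase p := by
  ext q
  by_cases hq : q = p
  · subst hq; simp [mem_asts]
  · simp [mem_asts, Finset.mem_erase, hq, setD_ne _ hq, mem_asts]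

lemma asts_starAt {f : CubeFace N} (p : Fin N) (hp : f p ≠ none) :
    asts (starAt f p) = insert p (asts f) := by
  ext q
  by_cases hq : q = p
  · subst hq; simp [mem_asts]
  · simp [mem_asts, hq, starAt_ne _ hq, hp]

lemma isFace_setD {k : ℕ} {f : CubeFace N} (hf : IsFace (k + 1) f) (p : Fin N) (d : Bool)
    (hp : f p = none) : IsFace k (setD f p d) := by
  rw [isFace_iff, asts_setD p d, Finset.card_erase_of_mem (mem_asts.mpr hp)]
  rw [isFace_iff] at hf
  omega

lemma isFace_starAt {k : ℕ} {f : CubeFace N} (hf : IsFace k f) (p : Fin N)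
    (hp : f p ≠ none) : IsFace (k + 1) (starAt f p) := by
  rw [isFace_iff, asts_starAt p hp, Finset.card_insert_of_notMem (by simp [mem_asts, hp])]
  rw [isFace_iff] at hf
  omega

lemma starAt_setD {f : CubeFace N} (p : Fin N) (d : Bool) (hp : f p = none) :
    starAt (setD f p d) p = f := by
  funext q
  by_cases hq : q = p
  · subst hq; rw [starAt_self, hp]
  · rw [starAt_ne _ hq, setD_ne _ hq]

lemma setD_starAt {f : CubeFace N} (p : Fin N) (b : Bool) (hp : f p = some b) :
    setD (starAt f p) p b = f := by
  funext q
  by_cases hq : q = p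
  · subst hq; rw [setD_self, hp]
  · rw [setD_ne _ hq, starAt_ne _ hq]

lemma kappa_setD_self (f : CubeFace N) (p : Fin N) (d : Bool) :
    kappa (setD f p d) p = kappa f p := kappa_setD_of_le le_rfl _

lemma kappa_starAt_self (f : CubeFace N) (p : Fin N) :
    kappa (starAt f p) p = kappa f p := kappa_starAt_of_le le_rfl

lemma outAt_starAt {h : CubeFace N} {p : Fin N} (hw : h p = some (!kappa h p)) :
    outAt (starAt h p) p = h := by
  rw [outAt_eq, kappa_starAt_self]
  exact setD_starAt p _ hw

lemma inAt_starAt {h : CubeFace N} {p : Fin N} (hw : h p = some (kappa h p)) :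
    inAt (starAt h p) p = h := by
  rw [inAt_eq, kappa_starAt_self]
  exact setD_starAt p _ hw

/-- increasing enumeration of the asterisk positions of a `k`-face -/
noncomputable def pEnum {k : ℕ} {f : CubeFace N} (hf : IsFace k f) : Fin k → Fin N :=
  (asts f).orderEmbOfFin hf

lemma pEnum_strictMono {k : ℕ} {f : CubeFace N} (hf : IsFace k f) :
    StrictMono (pEnum hf) := ((asts f).orderEmbOfFin hf).strictMono

lemma pEnum_none {k : ℕ} {f : CubeFace N} (hf : IsFace k f) (j : Fin k) :
    f (pEnum hf j) = none := mem_asts.mp (Finset.orderEmbOfFin_mem _ _ _)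

lemma pEnum_unique {k : ℕ} {f : CubeFace N} (hf : IsFace k f) {p : Fin k → Fin N}
    (hm : StrictMono p) (hn : ∀ j, f (p j) = none) : p = pEnum hf :=
  Finset.orderEmbOfFin_unique hf (fun x => mem_asts.mpr (hn x)) hm

/-- index of an asterisk position in the enumeration -/
noncomputable def idxOf {k : ℕ} {f : CubeFace N} (hf : IsFace k f) (p : Fin N)
    (hp : f p = none) : Fin k :=
  ((asts f).orderIsoOfFin hf).symm ⟨p, mem_asts.mpr hp⟩

lemma pEnum_idxOf {k : ℕ} {f : CubeFace N} (hf : IsFace k f) (p : Fin N)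
    (hp : f p = none) : pEnum hf (idxOf hf p hp) = p := by
  show (asts f).orderEmbOfFin hf (((asts f).orderIsoOfFin hf).symm ⟨p, mem_asts.mpr hp⟩) = p
  have := congrArg Subtype.val (((asts f).orderIsoOfFin hf).apply_symm_apply ⟨p, mem_asts.mpr hp⟩)
  exact this

lemma idxOf_pEnum {k : ℕ} {f : CubeFace N} (hf : IsFace k f) (j : Fin k) :
    idxOf hf (pEnum hf j) (pEnum_none hf j) = j := by
  apply (pEnum_strictMono hf).injective
  rw [pEnum_idxOf]

/-- a face all of whose digits are "correct" -/
def AllCorrect (g : CubeFace N) : Prop := ∀ i, g i ≠ none → g i = some (kappa g i)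

instance (g : CubeFace N) : Decidable (AllCorrect g) := by
  unfold AllCorrect
  infer_instance

lemma exists_wrong {g : CubeFace N} (h : ¬ AllCorrect g) :
    ∃ p, g p = some (!kappa g p) := by
  unfold AllCorrect at h
  push_neg at h
  obtain ⟨i, hne, hneq⟩ := h
  rcases ho : g i with _ | b
  · exact absurd ho hne
  · refine ⟨i, ?_⟩
    rw [ho] at hneq ⊢
    rcases Bool.eq_or_eq_not b (kappa g i) with hb | hb
    · exact absurd (by rw [hb]) hneq
    · rw [hb]

end SQ
namespace SQ
open Finset

variable {N : ℕ}

/-- the set of positions carrying a correct digit -/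
def corD (g : CubeFace N) : Finset (Fin N) :=
  Finset.univ.filter (fun p => g p = some (kappa g p))

lemma faceOrder_eq {n : ℕ} (hn : 1 ≤ n) {g : CubeFace N} (hg : IsFace (n - 1) g) :
    faceOrder n g = (corD g).card := by
  have hsucc : n - 1 + 1 = n := Nat.succ_pred_eq_of_pos hn
  have hbij : Function.Bijective
      (fun p : {p : Fin N // g p = some (kappa g p)} =>
        (⟨starAt g p.1, by
            have h1 := isFace_starAt hg p.1 (by rw [p.2]; simp)
            rw [hsucc] at h1
            exact h1, by
          refine ⟨p.1, starAt_self g p.1, ?_, fun q hq => (starAt_ne g hq).symm⟩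
          rw [kappa_starAt_self]
          exact p.2⟩ :
          {f : CubeFace N // IsFace n f ∧ Incoming f g})) := by
    constructor
    · rintro ⟨p, hp⟩ ⟨p', hp'⟩ h
      have h2 : starAt g p = starAt g p' := congrArg Subtype.val h
      by_contra hne
      have hne' : p ≠ p' := fun hh => hne (by simpa using hh)
      have h3 := congrFun h2 p
      rw [starAt_self, starAt_ne _ hne', hp] at h3
      cases h3
    · rintro ⟨f, hf, p, hsub⟩
      have hfp : f p = none := hsub.1
      have hkk : kappa f p = kappa g p := by
        apply kappa_congr
        intro q hq
        rw [hsub.2.2 q (ne_of_lt hq)]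
      have hgp : g p = some (kappa g p) := by rw [← hkk]; exact hsub.2.1
      refine ⟨⟨p, hgp⟩, ?_⟩
      apply Subtype.ext
      show starAt g p = f
      funext q
      by_cases hq : q = p
      · subst hq; rw [starAt_self, hfp]
      · rw [starAt_ne _ hq, hsub.2.2 q hq]
  have hcard := Nat.card_eq_of_bijective _ hbij
  unfold faceOrder
  rw [← hcard, Nat.card_eq_fintype_card, Fintype.card_subtype]
  rfl

lemma corD_subset {g : CubeFace N} :
    corD g ⊆ Finset.univ.filter (fun p => ¬ g p = none) := by
  intro p hp
  rw [corD, Finset.mem_filter] at hp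
  simp [hp.2]

lemma card_digits {k : ℕ} {g : CubeFace N} (hg : IsFace k g) :
    (Finset.univ.filter (fun p => ¬ g p = none)).card = N - k := by
  have h := Finset.card_filter_add_card_filter_not
    (s := Finset.univ) (p := fun q : Fin N => g q = none)
  rw [isFace_iff, asts] at hg
  simp only [Finset.card_univ, Fintype.card_fin] at h
  omega

lemma allCorrect_iff_corD {k : ℕ} {g : CubeFace N} (hg : IsFace k g) :
    AllCorrect g ↔ corD g = Finset.univ.filter (fun p => ¬ g p = none) := by
  constructor
  · intro hac
    apply Finset.Subset.antisymm corD_subset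
    intro p hp
    rw [Finset.mem_filter] at hp
    rw [corD, Finset.mem_filter]
    exact ⟨Finset.mem_univ _, hac p hp.2⟩
  · intro he i hi
    have : i ∈ corD g := by
      rw [he, Finset.mem_filter]
      exact ⟨Finset.mem_univ _, hi⟩
    rw [corD, Finset.mem_filter] at this
    exact this.2

lemma asts_card_le {k : ℕ} {g : CubeFace N} (hg : IsFace k g) : k ≤ N := by
  rw [isFace_iff] at hg
  rw [← hg]
  exact (Finset.card_le_card (Finset.subset_univ _)).trans (by simp)

/-- absolutely incoming faces are exactly the all-correct faces -/
lemma absIn_iff_allCorrect {n : ℕ} (hn : 1 ≤ n) (hN : n ≤ N) {g : CubeFace N}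
    (hg : IsFace (n - 1) g) : faceOrder n g = N - n + 1 ↔ AllCorrect g := by
  rw [faceOrder_eq hn hg]
  have hdig : (Finset.univ.filter (fun p => ¬ g p = none)).card = N - (n - 1) :=
    card_digits hg
  have hval : N - (n - 1) = N - n + 1 := by omega
  constructor
  · intro hc
    rw [allCorrect_iff_corD hg]
    apply Finset.eq_of_subset_of_card_le corD_subset
    omega
  · intro hac
    rw [(allCorrect_iff_corD hg).mp hac, hdig, hval]

end SQ
namespace SQ
open Finset

variable {N K : ℕ} {F : CubeFace N}

/-- the face of `I^N` inside the subcube spanned by the asterisks of `F`,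
corresponding to a face `σ` of `I^K`. -/
noncomputable def fromSub (hF : IsFace K F) (σ : CubeFace K) : CubeFace N :=
  fun q => if h : q ∈ asts F then σ (idxOf hF q (mem_asts.mp h)) else F q

lemma fromSub_pEnum (hF : IsFace K F) (σ : CubeFace K) (j : Fin K) :
    fromSub hF σ (pEnum hF j) = σ j := by
  unfold fromSub
  rw [dif_pos (mem_asts.mpr (pEnum_none hF j))]
  congr 1
  exact idxOf_pEnum hF j

lemma fromSub_not_mem (hF : IsFace K F) (σ : CubeFace K) {q : Fin N} (h : F q ≠ none) :
    fromSub hF σ q = F q := dif_neg (by simp [mem_asts, h])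

lemma asts_fromSub (hF : IsFace K F) (σ : CubeFace K) :
    asts (fromSub hF σ) = (asts σ).image (pEnum hF) := by
  ext q
  rw [mem_asts, Finset.mem_image]
  constructor
  · intro hq
    by_cases hmem : q ∈ asts F
    · refine ⟨idxOf hF q (mem_asts.mp hmem), ?_, pEnum_idxOf hF q (mem_asts.mp hmem)⟩
      rw [mem_asts]
      unfold fromSub at hq
      rw [dif_pos hmem] at hq
      exact hq
    · exact absurd ((fromSub_not_mem hF σ (fun hc => hmem (mem_asts.mpr hc))).symm.trans hq)
        (fun hc => hmem (mem_asts.mpr hc))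
  · rintro ⟨j, hj, rfl⟩
    rw [fromSub_pEnum]
    exact mem_asts.mp hj

lemma isFace_fromSub {m : ℕ} (hF : IsFace K F) {σ : CubeFace K} (hσ : IsFace m σ) :
    IsFace m (fromSub hF σ) := by
  rw [isFace_iff, asts_fromSub hF σ,
    Finset.card_image_of_injective _ (pEnum_strictMono hF).injective]
  exact hσ

lemma isFace_fromSub_rev {m : ℕ} (hF : IsFace K F) {σ : CubeFace K}
    (hσ : IsFace m (fromSub hF σ)) : IsFace m σ := by
  rw [isFace_iff, asts_fromSub hF σ,
    Finset.card_image_of_injective _ (pEnum_strictMono hF).injective] at hσ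
  exact hσ

lemma below_fromSub (hF : IsFace K F) (σ : CubeFace K) (k : Fin K) :
    below (fromSub hF σ) (pEnum hF k) = below σ k := by
  unfold below
  have hset : Finset.filter (fun q => q < pEnum hF k ∧ fromSub hF σ q = none) Finset.univ
      = (Finset.filter (fun j => j < k ∧ σ j = none) Finset.univ).image (pEnum hF) := by
    ext q
    rw [Finset.mem_image]
    simp only [Finset.mem_filter, Finset.mem_univ, true_and]
    constructor
    · rintro ⟨hlt, hnone⟩
      by_cases hmem : q ∈ asts F
      · set j := idxOf hF q (mem_asts.mp hmem) with hj
        have hpj : pEnum hF j = q := pEnum_idxOf hF q (mem_asts.mp hmem)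
        refine ⟨j, ⟨?_, ?_⟩, hpj⟩
        · have := hlt
          rw [← hpj] at this
          exact (pEnum_strictMono hF).lt_iff_lt.mp this
        · unfold fromSub at hnone
          rw [dif_pos hmem] at hnone
          exact hnone
      · exact absurd ((fromSub_not_mem hF σ (fun hc => hmem (mem_asts.mpr hc))).symm.trans
          hnone) (fun hc => hmem (mem_asts.mpr hc))
    · rintro ⟨j, ⟨hjk, hnone⟩, rfl⟩
      exact ⟨(pEnum_strictMono hF) hjk, by rw [fromSub_pEnum]; exact hnone⟩
  rw [hset, Finset.card_image_of_injective _ (pEnum_strictMono hF).injective]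

lemma kappa_fromSub (hF : IsFace K F) (σ : CubeFace K) (k : Fin K) :
    kappa (fromSub hF σ) (pEnum hF k) = kappa σ k := by
  rw [kappa_eq, kappa_eq, below_fromSub]

lemma fromSub_setD (hF : IsFace K F) (σ : CubeFace K) (k : Fin K) (d : Bool) :
    fromSub hF (setD σ k d) = setD (fromSub hF σ) (pEnum hF k) d := by
  funext q
  by_cases hmem : q ∈ asts F
  · have hpj : pEnum hF (idxOf hF q (mem_asts.mp hmem)) = q :=
      pEnum_idxOf hF q (mem_asts.mp hmem)
    by_cases hq : q = pEnum hF k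
    · subst hq
      rw [setD_self]
      unfold fromSub
      rw [dif_pos hmem]
      have : idxOf hF (pEnum hF k) (mem_asts.mp hmem) = k := idxOf_pEnum hF k
      rw [this, setD_self]
    · rw [setD_ne _ hq]
      unfold fromSub
      rw [dif_pos hmem, dif_pos hmem, setD_ne]
      intro hc
      exact hq (by rw [← hpj, hc])
  · have hF' : F q ≠ none := fun hc => hmem (mem_asts.mpr hc)
    have hq : q ≠ pEnum hF k := by
      intro hc
      exact hF' (by rw [hc]; exact pEnum_none hF k)
    rw [setD_ne _ hq, fromSub_not_mem hF _ hF', fromSub_not_mem hF _ hF']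

lemma fromSub_inAt (hF : IsFace K F) (σ : CubeFace K) (k : Fin K) :
    fromSub hF (inAt σ k) = inAt (fromSub hF σ) (pEnum hF k) := by
  rw [inAt_eq, inAt_eq, fromSub_setD, kappa_fromSub]

lemma fromSub_outAt (hF : IsFace K F) (σ : CubeFace K) (k : Fin K) :
    fromSub hF (outAt σ k) = outAt (fromSub hF σ) (pEnum hF k) := by
  rw [outAt_eq, outAt_eq, fromSub_setD, kappa_fromSub]

lemma fromSub_starAt (hF : IsFace K F) (σ : CubeFace K) (k : Fin K) :
    fromSub hF (starAt σ k) = starAt (fromSub hF σ) (pEnum hF k) := by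
  funext q
  by_cases hmem : q ∈ asts F
  · have hpj : pEnum hF (idxOf hF q (mem_asts.mp hmem)) = q :=
      pEnum_idxOf hF q (mem_asts.mp hmem)
    by_cases hq : q = pEnum hF k
    · subst hq
      rw [starAt_self]
      unfold fromSub
      rw [dif_pos hmem]
      have : idxOf hF (pEnum hF k) (mem_asts.mp hmem) = k := idxOf_pEnum hF k
      rw [this, starAt_self]
    · rw [starAt_ne _ hq]
      unfold fromSub
      rw [dif_pos hmem, dif_pos hmem, starAt_ne]
      intro hc
      exact hq (by rw [← hpj, hc])
  · have hF' : F q ≠ none := fun hc => hmem (mem_asts.mpr hc)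
    have hq : q ≠ pEnum hF k := by
      intro hc
      exact hF' (by rw [hc]; exact pEnum_none hF k)
    rw [starAt_ne _ hq, fromSub_not_mem hF _ hF', fromSub_not_mem hF _ hF']

lemma pEnum_fromSub {m : ℕ} (hF : IsFace K F) {σ : CubeFace K} (hσ : IsFace m σ)
    (hσ' : IsFace m (fromSub hF σ)) :
    pEnum hσ' = fun j => pEnum hF (pEnum hσ j) := by
  symm
  apply pEnum_unique
  · exact (pEnum_strictMono hF).comp (pEnum_strictMono hσ)
  · intro j
    rw [fromSub_pEnum]
    exact pEnum_none hσ j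

/-- the subcube face corresponding to an ambient face -/
noncomputable def toSub (hF : IsFace K F) (h : CubeFace N) : CubeFace K := fun k => h (pEnum hF k)

lemma idxOf_fromSub {m : ℕ} (hF : IsFace K F) {σ : CubeFace K} (hσ : IsFace m σ)
    (hσ' : IsFace m (fromSub hF σ)) (k : Fin K) (hk : σ k = none)
    (hk' : fromSub hF σ (pEnum hF k) = none) :
    idxOf hσ' (pEnum hF k) hk' = idxOf hσ k hk := by
  apply (pEnum_strictMono hσ').injective
  rw [pEnum_idxOf, pEnum_fromSub hF hσ hσ']
  exact (congrArg (pEnum hF) (pEnum_idxOf hσ k hk)).symm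

lemma fromSub_toSub (hF : IsFace K F) (h : CubeFace N)
    (hagr : ∀ q, F q ≠ none → h q = F q) : fromSub hF (toSub hF h) = h := by
  funext q
  by_cases hmem : q ∈ asts F
  · unfold fromSub toSub
    rw [dif_pos hmem, pEnum_idxOf]
  · have hF' : F q ≠ none := fun hc => hmem (mem_asts.mpr hc)
    rw [fromSub_not_mem hF _ hF', hagr q hF']

end SQ
namespace SQ
open Finset

variable {N n : ℕ} {X : Type*}

/-- the minimal wrong position of a non-all-correct face -/
noncomputable def wrongP (g : CubeFace N) (hg : ¬ AllCorrect g) : Fin N :=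
  (Finset.univ.filter fun p => g p = some (!kappa g p)).min'
    (by obtain ⟨p, hp⟩ := exists_wrong hg; exact ⟨p, by simp [hp]⟩)

lemma wrongP_spec (g : CubeFace N) (hg : ¬ AllCorrect g) :
    g (wrongP g hg) = some (!kappa g (wrongP g hg)) := by
  have := Finset.min'_mem (Finset.univ.filter fun p => g p = some (!kappa g p))
    (by obtain ⟨p, hp⟩ := exists_wrong hg; exact ⟨p, by simp [hp]⟩)
  simpa [wrongP] using this

lemma isFace_star_wrong (hn : 1 ≤ n) {h : CubeFace N} (hh : IsFace (n - 1) h) (p : Fin N)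
    (hw : h p = some (!kappa h p)) : IsFace n (starAt h p) := by
  have h1 := isFace_starAt hh p (by rw [hw]; simp)
  have he : n - 1 + 1 = n := by omega
  rwa [he] at h1

lemma isFace_inAt (hn : 1 ≤ n) {f : CubeFace N} (hf : IsFace n f) (p : Fin N)
    (hp : f p = none) : IsFace (n - 1) (inAt f p) := by
  rw [inAt_eq]
  have he : n - 1 + 1 = n := by omega
  exact isFace_setD (by rwa [he]) _ _ hp

lemma isFace_outAt (hn : 1 ≤ n) {f : CubeFace N} (hf : IsFace n f) (p : Fin N)
    (hp : f p = none) : IsFace (n - 1) (outAt f p) := by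
  rw [outAt_eq]
  have he : n - 1 + 1 = n := by omega
  exact isFace_setD (by rwa [he]) _ _ hp

lemma phi_lt_of_wrong {h : CubeFace N} {p : Fin N} (hw : h p = some (!kappa h p))
    {r : Fin N} (hr : starAt h p r = none) :
    phi (inAt (starAt h p) r) < phi h := by
  have h1 : outAt (starAt h p) p = h := outAt_starAt hw
  calc phi (inAt (starAt h p) r) < phi (outAt (starAt h p) p) :=
        phi_in_lt_out (starAt_self _ _) hr
    _ = phi h := by rw [h1]

/-- greedy coloring with fuel -/
noncomputable def gAux [Nonempty X] (hn : 1 ≤ n) (hN : n ≤ N)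
    (R : (Fin n → X) → (Fin n → X)) (c0 : AbsIn N n → X) :
    ℕ → FaceT N (n - 1) → X
  | 0, _ => Classical.arbitrary X
  | (m + 1), h =>
    if hac : AllCorrect h.1 then c0 ⟨h, (absIn_iff_allCorrect hn hN h.2).mpr hac⟩
    else
      R (fun j => gAux hn hN R c0 m ⟨inAt (starAt h.1 (wrongP h.1 hac))
            (pEnum (isFace_star_wrong hn h.2 _ (wrongP_spec h.1 hac)) j),
          isFace_inAt hn (isFace_star_wrong hn h.2 _ (wrongP_spec h.1 hac)) _
            (pEnum_none _ j)⟩)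
        (idxOf (isFace_star_wrong hn h.2 _ (wrongP_spec h.1 hac)) (wrongP h.1 hac)
          (starAt_self _ _))

lemma gAux_irrel [Nonempty X] (hn : 1 ≤ n) (hN : n ≤ N)
    (R : (Fin n → X) → (Fin n → X)) (c0 : AbsIn N n → X) :
    ∀ (m m' : ℕ) (h : FaceT N (n - 1)), phi h.1 < m → phi h.1 < m' →
    gAux hn hN R c0 m h = gAux hn hN R c0 m' h := by
  intro m
  induction m with
  | zero => intro m' h hm hm'; omega
  | succ m ih =>
    intro m' h hm hm'
    cases m' with
    | zero => omega
    | succ m' =>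
      by_cases hac : AllCorrect h.1
      · simp [gAux, hac]
      · simp only [gAux, dif_neg hac]
        congr 1
        funext j
        have hlt : phi (inAt (starAt h.1 (wrongP h.1 hac))
            (pEnum (isFace_star_wrong hn h.2 _ (wrongP_spec h.1 hac)) j)) < phi h.1 :=
          phi_lt_of_wrong (wrongP_spec h.1 hac) (pEnum_none _ j)
        apply ih
        · show phi (inAt (starAt h.1 (wrongP h.1 hac))
            (pEnum (isFace_star_wrong hn h.2 _ (wrongP_spec h.1 hac)) j)) < m
          omega
        · show phi (inAt (starAt h.1 (wrongP h.1 hac))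
            (pEnum (isFace_star_wrong hn h.2 _ (wrongP_spec h.1 hac)) j)) < m'
          omega

/-- the greedy coloring -/
noncomputable def greedy [Nonempty X] (hn : 1 ≤ n) (hN : n ≤ N)
    (R : (Fin n → X) → (Fin n → X)) (c0 : AbsIn N n → X) (h : FaceT N (n - 1)) : X :=
  gAux hn hN R c0 (phi h.1 + 1) h

lemma greedy_congr [Nonempty X] (hn : 1 ≤ n) (hN : n ≤ N)
    (R : (Fin n → X) → (Fin n → X)) (c0 : AbsIn N n → X)
    {h h' : FaceT N (n - 1)} (he : h.1 = h'.1) :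
    greedy hn hN R c0 h = greedy hn hN R c0 h' := by
  have : h = h' := Subtype.ext he
  rw [this]

lemma greedy_correct [Nonempty X] (hn : 1 ≤ n) (hN : n ≤ N)
    (R : (Fin n → X) → (Fin n → X)) (c0 : AbsIn N n → X)
    (h : FaceT N (n - 1)) (hac : AllCorrect h.1)
    (habs : faceOrder n h.1 = N - n + 1) :
    greedy hn hN R c0 h = c0 ⟨h, habs⟩ := by
  unfold greedy
  simp [gAux, hac]

lemma greedy_wrong [Nonempty X] (hn : 1 ≤ n) (hN : n ≤ N)
    (R : (Fin n → X) → (Fin n → X)) (c0 : AbsIn N n → X)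
    (h : FaceT N (n - 1)) (hnac : ¬ AllCorrect h.1)
    (hf : IsFace n (starAt h.1 (wrongP h.1 hnac)))
    (gin : Fin n → FaceT N (n - 1))
    (hgin : ∀ j, (gin j).1 = inAt (starAt h.1 (wrongP h.1 hnac)) (pEnum hf j))
    (hp : starAt h.1 (wrongP h.1 hnac) (wrongP h.1 hnac) = none) :
    greedy hn hN R c0 h
      = R (fun j => greedy hn hN R c0 (gin j)) (idxOf hf (wrongP h.1 hnac) hp) := by
  unfold greedy
  rw [show gAux hn hN R c0 (phi h.1 + 1) h
      = R (fun j => gAux hn hN R c0 (phi h.1) ⟨inAt (starAt h.1 (wrongP h.1 hnac))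
            (pEnum (isFace_star_wrong hn h.2 _ (wrongP_spec h.1 hnac)) j),
          isFace_inAt hn (isFace_star_wrong hn h.2 _ (wrongP_spec h.1 hnac)) _
            (pEnum_none _ j)⟩)
        (idxOf (isFace_star_wrong hn h.2 _ (wrongP_spec h.1 hnac)) (wrongP h.1 hnac)
          (starAt_self _ _)) from by simp only [gAux, dif_neg hnac]]
  congr 1
  funext j
  have he : (gin j).1 = inAt (starAt h.1 (wrongP h.1 hnac))
      (pEnum (isFace_star_wrong hn h.2 _ (wrongP_spec h.1 hnac)) j) := hgin j
  have hlt : phi (inAt (starAt h.1 (wrongP h.1 hnac))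
      (pEnum (isFace_star_wrong hn h.2 _ (wrongP_spec h.1 hnac)) j)) < phi h.1 :=
    phi_lt_of_wrong (wrongP_spec h.1 hnac) (pEnum_none _ j)
  refine Eq.trans (gAux_irrel hn hN R c0 (phi h.1) (phi (gin j).1 + 1) _
    (by
      show phi (inAt (starAt h.1 (wrongP h.1 hnac))
        (pEnum (isFace_star_wrong hn h.2 _ (wrongP_spec h.1 hnac)) j)) < phi h.1
      omega)
    (by
      show phi (inAt (starAt h.1 (wrongP h.1 hnac))
        (pEnum (isFace_star_wrong hn h.2 _ (wrongP_spec h.1 hnac)) j)) < phi (gin j).1 + 1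
      rw [he]
      omega)) ?_
  have hel : (⟨inAt (starAt h.1 (wrongP h.1 hnac))
        (pEnum (isFace_star_wrong hn h.2 _ (wrongP_spec h.1 hnac)) j),
      isFace_inAt hn (isFace_star_wrong hn h.2 _ (wrongP_spec h.1 hnac)) _
        (pEnum_none _ j)⟩ : FaceT N (n - 1)) = gin j := Subtype.ext he.symm
  rw [hel]

/-- permitted colorings are determined by their values on all-correct faces -/
lemma permitted_unique (hn : 1 ≤ n)
    (R : (Fin n → X) → (Fin n → X)) {c c' : FaceT N (n - 1) → X}
    (hc : Permitted R c) (hc' : Permitted R c')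
    (hres : ∀ h : FaceT N (n - 1), AllCorrect h.1 → c h = c' h) : c = c' := by
  suffices H : ∀ (m : ℕ) (h : FaceT N (n - 1)), phi h.1 < m → c h = c' h by
    funext h
    exact H (phi h.1 + 1) h (by omega)
  intro m
  induction m with
  | zero => intro h hm; omega
  | succ m ih =>
    intro h hm
    by_cases hac : AllCorrect h.1
    · exact hres h hac
    · obtain ⟨p, hw⟩ := exists_wrong hac
      have hf : IsFace n (starAt h.1 p) := isFace_star_wrong hn h.2 p hw
      have hgin : ∀ j : Fin n, IsFace (n - 1) (inAt (starAt h.1 p) (pEnum hf j)) :=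
        fun j => isFace_inAt hn hf _ (pEnum_none hf j)
      have hgout : ∀ j : Fin n, IsFace (n - 1) (outAt (starAt h.1 p) (pEnum hf j)) :=
        fun j => isFace_outAt hn hf _ (pEnum_none hf j)
      have r1 := hc (starAt h.1 p) hf (pEnum hf) (pEnum_strictMono hf) (pEnum_none hf)
        (fun j => ⟨inAt (starAt h.1 p) (pEnum hf j), hgin j⟩)
        (fun j => ⟨outAt (starAt h.1 p) (pEnum hf j), hgout j⟩)
        (fun j => rfl) (fun j => rfl)
      have r2 := hc' (starAt h.1 p) hf (pEnum hf) (pEnum_strictMono hf) (pEnum_none hf)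
        (fun j => ⟨inAt (starAt h.1 p) (pEnum hf j), hgin j⟩)
        (fun j => ⟨outAt (starAt h.1 p) (pEnum hf j), hgout j⟩)
        (fun j => rfl) (fun j => rfl)
      have hpk0 : pEnum hf (idxOf hf p (starAt_self _ _)) = p :=
        pEnum_idxOf hf p (starAt_self _ _)
      have hout : outAt (starAt h.1 p) (pEnum hf (idxOf hf p (starAt_self _ _))) = h.1 := by
        rw [hpk0]
        exact outAt_starAt hw
      have hinputs : (fun j => c ⟨inAt (starAt h.1 p) (pEnum hf j), hgin j⟩)
          = (fun j => c' ⟨inAt (starAt h.1 p) (pEnum hf j), hgin j⟩) := by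
        funext j
        apply ih
        show phi (inAt (starAt h.1 p) (pEnum hf j)) < m
        have := phi_lt_of_wrong hw (pEnum_none hf j)
        omega
      have e1 := congrFun r1 (idxOf hf p (starAt_self _ _))
      have e2 := congrFun r2 (idxOf hf p (starAt_self _ _))
      have hch : c ⟨outAt (starAt h.1 p) (pEnum hf (idxOf hf p (starAt_self _ _))),
          hgout _⟩ = c h := by
        congr 1
        exact Subtype.ext hout
      have hch' : c' ⟨outAt (starAt h.1 p) (pEnum hf (idxOf hf p (starAt_self _ _))),
          hgout _⟩ = c' h := by
        congr 1
        exact Subtype.ext hout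
      rw [← hch, ← hch', e1, e2, hinputs]

end SQ
namespace SQ
open Finset

variable {N n : ℕ} {X : Type*}

lemma pEnum_congr {k : ℕ} {f f' : CubeFace N} (he : f = f') (hf : IsFace k f)
    (hf' : IsFace k f') : pEnum hf = pEnum hf' := by subst he; rfl

lemma idxOf_congr {k : ℕ} {f f' : CubeFace N} (he : f = f') {p p' : Fin N} (hpp : p = p')
    (hf : IsFace k f) (hf' : IsFace k f') (hp : f p = none) (hp' : f' p' = none) :
    idxOf hf p hp = idxOf hf' p' hp' := by subst he; subst hpp; rfl

/-- agreement between the greedy coloring and a permitted coloring of an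
`(n+1)`-subcube, assuming the recursion formula holds below level `m` -/
lemma agree [Nonempty X] (hn1 : 1 ≤ n) (hN : n ≤ N)
    (R : (Fin n → X) → (Fin n → X)) (c0 : AbsIn N n → X) (m : ℕ)
    (ih : ∀ (h : FaceT N (n - 1)), phi h.1 < m →
      ∀ (p : Fin N), h.1 p = some (!kappa h.1 p) →
      ∀ (hf : IsFace n (starAt h.1 p)) (gin : Fin n → FaceT N (n - 1)),
      (∀ j, (gin j).1 = inAt (starAt h.1 p) (pEnum hf j)) →
      ∀ (hp : starAt h.1 p p = none),
      greedy hn1 hN R c0 h = R (fun j => greedy hn1 hN R c0 (gin j)) (idxOf hf p hp))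
    {F : CubeFace N} (hF : IsFace (n + 1) F)
    (cs : FaceT (n + 1) (n - 1) → X) (hcsP : Permitted R cs)
    (hcs0 : ∀ (σ : FaceT (n + 1) (n - 1)), AllCorrect σ.1 →
      cs σ = greedy hn1 hN R c0 ⟨fromSub hF σ.1, isFace_fromSub hF σ.2⟩) :
    ∀ (B : ℕ) (σ : FaceT (n + 1) (n - 1)), phi (fromSub hF σ.1) < B →
      phi (fromSub hF σ.1) < m →
      greedy hn1 hN R c0 ⟨fromSub hF σ.1, isFace_fromSub hF σ.2⟩ = cs σ := by
  intro B
  induction B with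
  | zero => intro σ h1 _; omega
  | succ B ihB =>
    intro σ hB hm
    by_cases hac : AllCorrect σ.1
    · exact (hcs0 σ hac).symm
    · obtain ⟨k, hk⟩ := exists_wrong hac
      have hφ : IsFace n (starAt σ.1 k) := isFace_star_wrong hn1 σ.2 k hk
      have h1 : IsFace n (fromSub hF (starAt σ.1 k)) := isFace_fromSub hF hφ
      have hstar : fromSub hF (starAt σ.1 k) = starAt (fromSub hF σ.1) (pEnum hF k) :=
        fromSub_starAt hF σ.1 k
      have hfamb : IsFace n (starAt (fromSub hF σ.1) (pEnum hF k)) := by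
        rw [← hstar]; exact h1
      have hwamb : fromSub hF σ.1 (pEnum hF k)
          = some (!kappa (fromSub hF σ.1) (pEnum hF k)) := by
        rw [fromSub_pEnum, kappa_fromSub]; exact hk
      have hpe : pEnum hfamb = fun j => pEnum hF (pEnum hφ j) := by
        rw [pEnum_congr hstar.symm hfamb h1]
        exact pEnum_fromSub hF hφ h1
      -- the subcube input faces
      have hsubin : ∀ j : Fin n, IsFace (n - 1) (inAt (starAt σ.1 k) (pEnum hφ j)) :=
        fun j => isFace_inAt hn1 hφ _ (pEnum_none hφ j)
      have hsubout : ∀ j : Fin n, IsFace (n - 1) (outAt (starAt σ.1 k) (pEnum hφ j)) :=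
        fun j => isFace_outAt hn1 hφ _ (pEnum_none hφ j)
      -- ambient input faces, realized through the subcube
      have hchain : ∀ j : Fin n, fromSub hF (inAt (starAt σ.1 k) (pEnum hφ j))
          = inAt (starAt (fromSub hF σ.1) (pEnum hF k)) (pEnum hfamb j) := by
        intro j
        rw [fromSub_inAt, hstar, hpe]
      have hambin : ∀ j : Fin n,
          IsFace (n - 1) (fromSub hF (inAt (starAt σ.1 k) (pEnum hφ j))) :=
        fun j => isFace_fromSub hF (hsubin j)
      -- apply the outer induction hypothesis (the recursion formula)
      have hrec := ih ⟨fromSub hF σ.1, isFace_fromSub hF σ.2⟩ hm (pEnum hF k) hwamb hfamb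
        (fun j => ⟨fromSub hF (inAt (starAt σ.1 k) (pEnum hφ j)), hambin j⟩)
        (fun j => hchain j) (starAt_self _ _)
      -- phi decrease for the inputs
      have hphi : ∀ j : Fin n, phi (fromSub hF (inAt (starAt σ.1 k) (pEnum hφ j)))
          < phi (fromSub hF σ.1) := by
        intro j
        rw [hchain j]
        apply phi_lt_of_wrong hwamb
        simp only [hpe]
        rw [← hstar, fromSub_pEnum]
        exact pEnum_none hφ j
      -- inner induction: the inputs agree with cs
      have hin : ∀ j : Fin n,
          greedy hn1 hN R c0 ⟨fromSub hF (inAt (starAt σ.1 k) (pEnum hφ j)), hambin j⟩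
            = cs ⟨inAt (starAt σ.1 k) (pEnum hφ j), hsubin j⟩ := by
        intro j
        apply ihB ⟨inAt (starAt σ.1 k) (pEnum hφ j), hsubin j⟩
        · show phi (fromSub hF (inAt (starAt σ.1 k) (pEnum hφ j))) < B
          have := hphi j
          omega
        · show phi (fromSub hF (inAt (starAt σ.1 k) (pEnum hφ j))) < m
          have := hphi j
          omega
      -- the permitted relation of cs at the subcube face
      have rs := hcsP (starAt σ.1 k) hφ (pEnum hφ) (pEnum_strictMono hφ) (pEnum_none hφ)
        (fun j => ⟨inAt (starAt σ.1 k) (pEnum hφ j), hsubin j⟩)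
        (fun j => ⟨outAt (starAt σ.1 k) (pEnum hφ j), hsubout j⟩)
        (fun j => rfl) (fun j => rfl)
      have rseval := congrFun rs (idxOf hφ k (starAt_self _ _))
      have houtid : outAt (starAt σ.1 k) (pEnum hφ (idxOf hφ k (starAt_self _ _))) = σ.1 := by
        rw [pEnum_idxOf]
        exact outAt_starAt hk
      have hcssig : cs ⟨outAt (starAt σ.1 k) (pEnum hφ (idxOf hφ k (starAt_self _ _))),
          hsubout _⟩ = cs σ := by
        congr 1
        exact Subtype.ext houtid
      -- index transport
      have hidx : idxOf hfamb (pEnum hF k) (starAt_self _ _)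
          = idxOf hφ k (starAt_self _ _) := by
        rw [idxOf_congr hstar.symm rfl hfamb h1 (starAt_self _ _)
          (by rw [hstar]; exact starAt_self _ _)]
        exact idxOf_fromSub hF hφ h1 k (starAt_self _ _) _
      rw [hrec, hidx]
      rw [← hcssig, rseval]
      congr 1
      funext j
      exact hin j

end SQ
namespace SQ
open Finset

variable {N n : ℕ} {X : Type*}

theorem greedy_S [Nonempty X] (hn1 : 1 ≤ n) (hN : n ≤ N)
    (R : (Fin n → X) → (Fin n → X))
    (hR : ∀ c0' : AbsIn (n + 1) n → X,
      ∃ c : FaceT (n + 1) (n - 1) → X, Permitted R c ∧ resAbs c = c0')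
    (c0 : AbsIn N n → X) :
    ∀ (m : ℕ) (h : FaceT N (n - 1)), phi h.1 < m →
      ∀ (p : Fin N), h.1 p = some (!kappa h.1 p) →
      ∀ (hf : IsFace n (starAt h.1 p)) (gin : Fin n → FaceT N (n - 1)),
      (∀ j, (gin j).1 = inAt (starAt h.1 p) (pEnum hf j)) →
      ∀ (hp : starAt h.1 p p = none),
      greedy hn1 hN R c0 h = R (fun j => greedy hn1 hN R c0 (gin j)) (idxOf hf p hp) := by
  intro m
  induction m with
  | zero => intro h hm; omega
  | succ m ih =>
    intro h hm p hw hf gin hgin hp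
    have hnac : ¬ AllCorrect h.1 := by
      intro hac
      have h2 := hac p (by rw [hw]; simp)
      rw [hw] at h2
      have h3 := Option.some.inj h2
      simp at h3
    have hwq : h.1 (wrongP h.1 hnac) = some (!kappa h.1 (wrongP h.1 hnac)) := wrongP_spec h.1 hnac
    by_cases hpq : p = (wrongP h.1 hnac)
    · subst hpq
      exact greedy_wrong hn1 hN R c0 h hnac hf gin hgin hp
    · -- the two wrong positions span an (n+1)-subcube
      have hqp : (wrongP h.1 hnac) ≠ p := fun he => hpq he.symm
      have hFpre : (starAt h.1 p) (wrongP h.1 hnac) = h.1 (wrongP h.1 hnac) := starAt_ne _ hqp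
      have hF : IsFace (n + 1) (starAt (starAt h.1 p) (wrongP h.1 hnac)) :=
        isFace_starAt hf (wrongP h.1 hnac) (by rw [hFpre, hwq]; simp)
      have hFp : (starAt (starAt h.1 p) (wrongP h.1 hnac)) p = none := by
        rw [starAt_ne _ hpq]
        exact starAt_self _ _
      have hFq : (starAt (starAt h.1 p) (wrongP h.1 hnac)) (wrongP h.1 hnac) = none := starAt_self _ _
      have hagr : ∀ r, (starAt (starAt h.1 p) (wrongP h.1 hnac)) r ≠ none →
          h.1 r = (starAt (starAt h.1 p) (wrongP h.1 hnac)) r := by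
        intro r hr
        have hrq : r ≠ (wrongP h.1 hnac) := by rintro rfl; exact hr (starAt_self _ _)
        have hrp : r ≠ p := by rintro rfl; exact hr hFp
        rw [starAt_ne _ hrq, starAt_ne _ hrp]
      have hσh : fromSub hF (toSub hF h.1) = h.1 := fromSub_toSub hF h.1 hagr
      have hσhface : IsFace (n - 1) (toSub hF h.1) :=
        isFace_fromSub_rev hF (by rw [hσh]; exact h.2)
      have hkp : pEnum hF (idxOf hF p hFp) = p := pEnum_idxOf hF p hFp
      have hkq : pEnum hF (idxOf hF (wrongP h.1 hnac) hFq) = (wrongP h.1 hnac) := pEnum_idxOf hF (wrongP h.1 hnac) hFq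
      -- wrongness of the subcube face at both indices
      have hkapp : kappa (toSub hF h.1) (idxOf hF p hFp) = kappa h.1 p := by
        rw [← kappa_fromSub hF (toSub hF h.1) (idxOf hF p hFp), hσh, hkp]
      have hvp : toSub hF h.1 (idxOf hF p hFp) = h.1 p := by
        show h.1 (pEnum hF (idxOf hF p hFp)) = h.1 p
        rw [hkp]
      have hwsp : toSub hF h.1 (idxOf hF p hFp) = some (!kappa (toSub hF h.1) (idxOf hF p hFp)) := by
        rw [hvp, hkapp]
        exact hw
      have hkapq : kappa (toSub hF h.1) (idxOf hF (wrongP h.1 hnac) hFq) = kappa h.1 (wrongP h.1 hnac) := by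
        rw [← kappa_fromSub hF (toSub hF h.1) (idxOf hF (wrongP h.1 hnac) hFq), hσh, hkq]
      have hvq : toSub hF h.1 (idxOf hF (wrongP h.1 hnac) hFq) = h.1 (wrongP h.1 hnac) := by
        show h.1 (pEnum hF (idxOf hF (wrongP h.1 hnac) hFq)) = h.1 (wrongP h.1 hnac)
        rw [hkq]
      have hwsq : toSub hF h.1 (idxOf hF (wrongP h.1 hnac) hFq) = some (!kappa (toSub hF h.1) (idxOf hF (wrongP h.1 hnac) hFq)) := by
        rw [hvq, hkapq]
        exact hwq
      -- subcube n-faces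
      have hφp : IsFace n (starAt (toSub hF h.1) (idxOf hF p hFp)) :=
        isFace_star_wrong hn1 hσhface _ hwsp
      have hφq : IsFace n (starAt (toSub hF h.1) (idxOf hF (wrongP h.1 hnac) hFq)) :=
        isFace_star_wrong hn1 hσhface _ hwsq
      have h1p : IsFace n (fromSub hF (starAt (toSub hF h.1) (idxOf hF p hFp))) := isFace_fromSub hF hφp
      have h1q : IsFace n (fromSub hF (starAt (toSub hF h.1) (idxOf hF (wrongP h.1 hnac) hFq))) := isFace_fromSub hF hφq
      have hfsp : fromSub hF (starAt (toSub hF h.1) (idxOf hF p hFp)) = starAt h.1 p := by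
        rw [fromSub_starAt, hσh, hkp]
      have hfsq : fromSub hF (starAt (toSub hF h.1) (idxOf hF (wrongP h.1 hnac) hFq)) = starAt h.1 (wrongP h.1 hnac) := by
        rw [fromSub_starAt, hσh, hkq]
      have hfq : IsFace n (starAt h.1 (wrongP h.1 hnac)) := by rw [← hfsq]; exact h1q
      have hpep : pEnum hf = fun j => pEnum hF (pEnum hφp j) := by
        rw [pEnum_congr hfsp.symm hf h1p]
        exact pEnum_fromSub hF hφp h1p
      have hpeq : pEnum hfq = fun j => pEnum hF (pEnum hφq j) := by
        rw [pEnum_congr hfsq.symm hfq h1q]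
        exact pEnum_fromSub hF hφq h1q
      have hsubinp : ∀ j : Fin n,
          IsFace (n - 1) (inAt (starAt (toSub hF h.1) (idxOf hF p hFp)) (pEnum hφp j)) :=
        fun j => isFace_inAt hn1 hφp _ (pEnum_none hφp j)
      have hsuboutp : ∀ j : Fin n,
          IsFace (n - 1) (outAt (starAt (toSub hF h.1) (idxOf hF p hFp)) (pEnum hφp j)) :=
        fun j => isFace_outAt hn1 hφp _ (pEnum_none hφp j)
      have hsubinq : ∀ j : Fin n,
          IsFace (n - 1) (inAt (starAt (toSub hF h.1) (idxOf hF (wrongP h.1 hnac) hFq)) (pEnum hφq j)) :=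
        fun j => isFace_inAt hn1 hφq _ (pEnum_none hφq j)
      have hsuboutq : ∀ j : Fin n,
          IsFace (n - 1) (outAt (starAt (toSub hF h.1) (idxOf hF (wrongP h.1 hnac) hFq)) (pEnum hφq j)) :=
        fun j => isFace_outAt hn1 hφq _ (pEnum_none hφq j)
      have hchainp : ∀ j : Fin n,
          fromSub hF (inAt (starAt (toSub hF h.1) (idxOf hF p hFp)) (pEnum hφp j))
            = inAt (starAt h.1 p) (pEnum hf j) := by
        intro j
        rw [fromSub_inAt, hfsp, hpep]
      have hchainq : ∀ j : Fin n,
          fromSub hF (inAt (starAt (toSub hF h.1) (idxOf hF (wrongP h.1 hnac) hFq)) (pEnum hφq j))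
            = inAt (starAt h.1 (wrongP h.1 hnac)) (pEnum hfq j) := by
        intro j
        rw [fromSub_inAt, hfsq, hpeq]
      have hginq : ∀ j : Fin n, IsFace (n - 1) (inAt (starAt h.1 (wrongP h.1 hnac)) (pEnum hfq j)) :=
        fun j => isFace_inAt hn1 hfq _ (pEnum_none hfq j)
      -- the permitted coloring of the subcube from the simplex equation
      obtain ⟨cs, hcsP, hcsR⟩ := hR (fun g =>
        greedy hn1 hN R c0 ⟨fromSub hF g.1.1, isFace_fromSub hF g.1.2⟩)
      have hcs0 : ∀ (σ : FaceT (n + 1) (n - 1)), AllCorrect σ.1 →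
          cs σ = greedy hn1 hN R c0 ⟨fromSub hF σ.1, isFace_fromSub hF σ.2⟩ := by
        intro σ hac
        have habs : faceOrder n σ.1 = (n + 1) - n + 1 :=
          (absIn_iff_allCorrect hn1 (by omega) σ.2).mpr hac
        exact congrFun hcsR ⟨σ, habs⟩
      -- q-side: definition of the greedy value
      have hA := greedy_wrong hn1 hN R c0 h hnac hfq
        (fun j => ⟨inAt (starAt h.1 (wrongP h.1 hnac)) (pEnum hfq j), hginq j⟩)
        (fun j => rfl) (starAt_self _ _)
      -- q-side agreement
      have hagrq : ∀ j : Fin n,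
          greedy hn1 hN R c0 ⟨inAt (starAt h.1 (wrongP h.1 hnac)) (pEnum hfq j), hginq j⟩
            = cs ⟨inAt (starAt (toSub hF h.1) (idxOf hF (wrongP h.1 hnac) hFq)) (pEnum hφq j), hsubinq j⟩ := by
        intro j
        have hb : phi (fromSub hF (inAt (starAt (toSub hF h.1) (idxOf hF (wrongP h.1 hnac) hFq)) (pEnum hφq j))) < m := by
          rw [hchainq j]
          have := phi_lt_of_wrong hwq (pEnum_none hfq j)
          omega
        calc greedy hn1 hN R c0 ⟨inAt (starAt h.1 (wrongP h.1 hnac)) (pEnum hfq j), hginq j⟩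
            = greedy hn1 hN R c0 ⟨fromSub hF (inAt (starAt (toSub hF h.1) (idxOf hF (wrongP h.1 hnac) hFq))
                (pEnum hφq j)), isFace_fromSub hF (hsubinq j)⟩ :=
              greedy_congr hn1 hN R c0 (hchainq j).symm
          _ = cs ⟨inAt (starAt (toSub hF h.1) (idxOf hF (wrongP h.1 hnac) hFq)) (pEnum hφq j), hsubinq j⟩ :=
              agree hn1 hN R c0 m ih hF cs hcsP hcs0 m
                ⟨inAt (starAt (toSub hF h.1) (idxOf hF (wrongP h.1 hnac) hFq)) (pEnum hφq j), hsubinq j⟩ hb hb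
      -- q-side relation of cs
      have rsq := hcsP (starAt (toSub hF h.1) (idxOf hF (wrongP h.1 hnac) hFq)) hφq (pEnum hφq) (pEnum_strictMono hφq)
        (pEnum_none hφq)
        (fun j => ⟨inAt (starAt (toSub hF h.1) (idxOf hF (wrongP h.1 hnac) hFq)) (pEnum hφq j), hsubinq j⟩)
        (fun j => ⟨outAt (starAt (toSub hF h.1) (idxOf hF (wrongP h.1 hnac) hFq)) (pEnum hφq j), hsuboutq j⟩)
        (fun j => rfl) (fun j => rfl)
      have rsqe := congrFun rsq (idxOf hφq (idxOf hF (wrongP h.1 hnac) hFq) (starAt_self _ _))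
      have houtq : outAt (starAt (toSub hF h.1) (idxOf hF (wrongP h.1 hnac) hFq))
          (pEnum hφq (idxOf hφq (idxOf hF (wrongP h.1 hnac) hFq) (starAt_self _ _))) = toSub hF h.1 := by
        rw [pEnum_idxOf]
        exact outAt_starAt hwsq
      have hcsq : cs ⟨outAt (starAt (toSub hF h.1) (idxOf hF (wrongP h.1 hnac) hFq))
          (pEnum hφq (idxOf hφq (idxOf hF (wrongP h.1 hnac) hFq) (starAt_self _ _))), hsuboutq _⟩
            = cs ⟨toSub hF h.1, hσhface⟩ := by
        congr 1
        exact Subtype.ext houtq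
      have hidxq : idxOf hfq (wrongP h.1 hnac) (starAt_self _ _) = idxOf hφq (idxOf hF (wrongP h.1 hnac) hFq) (starAt_self _ _) := by
        have step1 : idxOf hfq (wrongP h.1 hnac) (starAt_self _ _)
            = idxOf h1q (pEnum hF (idxOf hF (wrongP h.1 hnac) hFq)) (by rw [hfsq, hkq]; exact starAt_self _ _) :=
          idxOf_congr hfsq.symm hkq.symm hfq h1q _ _
        rw [step1]
        exact idxOf_fromSub hF hφq h1q (idxOf hF (wrongP h.1 hnac) hFq) (starAt_self _ _) _
      -- left half: greedy h = cs (toSub h)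
      have hleft : greedy hn1 hN R c0 h = cs ⟨toSub hF h.1, hσhface⟩ := by
        rw [hA, hidxq, ← hcsq, rsqe]
        congr 1
        funext j
        exact hagrq j
      -- p-side agreement
      have hagrp : ∀ j : Fin n, greedy hn1 hN R c0 (gin j)
          = cs ⟨inAt (starAt (toSub hF h.1) (idxOf hF p hFp)) (pEnum hφp j), hsubinp j⟩ := by
        intro j
        have hb : phi (fromSub hF (inAt (starAt (toSub hF h.1) (idxOf hF p hFp)) (pEnum hφp j))) < m := by
          rw [hchainp j]
          have := phi_lt_of_wrong hw (pEnum_none hf j)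
          omega
        have he2 : (gin j).1
            = fromSub hF (inAt (starAt (toSub hF h.1) (idxOf hF p hFp)) (pEnum hφp j)) := by
          rw [hgin j, ← hchainp j]
        calc greedy hn1 hN R c0 (gin j)
            = greedy hn1 hN R c0 ⟨fromSub hF (inAt (starAt (toSub hF h.1) (idxOf hF p hFp))
                (pEnum hφp j)), isFace_fromSub hF (hsubinp j)⟩ :=
              greedy_congr hn1 hN R c0 he2
          _ = cs ⟨inAt (starAt (toSub hF h.1) (idxOf hF p hFp)) (pEnum hφp j), hsubinp j⟩ :=
              agree hn1 hN R c0 m ih hF cs hcsP hcs0 m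
                ⟨inAt (starAt (toSub hF h.1) (idxOf hF p hFp)) (pEnum hφp j), hsubinp j⟩ hb hb
      -- p-side relation of cs
      have rsp := hcsP (starAt (toSub hF h.1) (idxOf hF p hFp)) hφp (pEnum hφp) (pEnum_strictMono hφp)
        (pEnum_none hφp)
        (fun j => ⟨inAt (starAt (toSub hF h.1) (idxOf hF p hFp)) (pEnum hφp j), hsubinp j⟩)
        (fun j => ⟨outAt (starAt (toSub hF h.1) (idxOf hF p hFp)) (pEnum hφp j), hsuboutp j⟩)
        (fun j => rfl) (fun j => rfl)
      have rspe := congrFun rsp (idxOf hφp (idxOf hF p hFp) (starAt_self _ _))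
      have houtp : outAt (starAt (toSub hF h.1) (idxOf hF p hFp))
          (pEnum hφp (idxOf hφp (idxOf hF p hFp) (starAt_self _ _))) = toSub hF h.1 := by
        rw [pEnum_idxOf]
        exact outAt_starAt hwsp
      have hcsp2 : cs ⟨outAt (starAt (toSub hF h.1) (idxOf hF p hFp))
          (pEnum hφp (idxOf hφp (idxOf hF p hFp) (starAt_self _ _))), hsuboutp _⟩
            = cs ⟨toSub hF h.1, hσhface⟩ := by
        congr 1
        exact Subtype.ext houtp
      have hidxp : idxOf hf p hp = idxOf hφp (idxOf hF p hFp) (starAt_self _ _) := by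
        have step1 : idxOf hf p hp
            = idxOf h1p (pEnum hF (idxOf hF p hFp)) (by rw [hfsp, hkp]; exact starAt_self _ _) :=
          idxOf_congr hfsp.symm hkp.symm hf h1p _ _
        rw [step1]
        exact idxOf_fromSub hF hφp h1p (idxOf hF p hFp) (starAt_self _ _) _
      rw [hleft, hidxp, ← hcsp2, rspe]
      congr 1
      funext j
      exact (hagrp j).symm

end SQ
namespace SQ
open Finset

variable {N n : ℕ} {X : Type*}

/-- the greedy coloring is permitted -/
lemma greedy_permitted [Nonempty X] (hn1 : 1 ≤ n) (hN : n ≤ N)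
    (R : (Fin n → X) → (Fin n → X))
    (hR : ∀ c0' : AbsIn (n + 1) n → X,
      ∃ c : FaceT (n + 1) (n - 1) → X, Permitted R c ∧ resAbs c = c0')
    (c0 : AbsIn N n → X) : Permitted R (greedy hn1 hN R c0) := by
  intro f hface pfun hmono hnone gIn gOut hgIn hgOut
  have hpeq : pfun = pEnum hface := pEnum_unique hface hmono hnone
  subst hpeq
  funext k
  have hout : (gOut k).1 = outAt f (pEnum hface k) := hgOut k
  have hw : (gOut k).1 (pEnum hface k) = some (!kappa (gOut k).1 (pEnum hface k)) := by
    rw [hout, outAt_eq, setD_self, kappa_setD_self]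
  have hstar : starAt (gOut k).1 (pEnum hface k) = f := by
    rw [hout, outAt_eq]
    exact starAt_setD _ _ (hnone k)
  have hface' : IsFace n (starAt (gOut k).1 (pEnum hface k)) := by
    rw [hstar]; exact hface
  have hpe2 : pEnum hface' = pEnum hface := pEnum_congr hstar hface' hface
  have hS := greedy_S hn1 hN R hR c0 (phi (gOut k).1 + 1) (gOut k) (by omega)
    (pEnum hface k) hw hface' gIn
    (fun j => by rw [hpe2, hstar]; exact hgIn j)
    (by rw [hstar]; exact hnone k)
  rw [hS]
  congr 1
  rw [idxOf_congr hstar rfl hface' hface _ (hnone k)]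
  exact idxOf_pEnum hface k

/-- the greedy coloring extends the initial data -/
lemma greedy_res [Nonempty X] (hn1 : 1 ≤ n) (hN : n ≤ N)
    (R : (Fin n → X) → (Fin n → X)) (c0 : AbsIn N n → X) :
    resAbs (greedy hn1 hN R c0) = c0 := by
  funext g
  show greedy hn1 hN R c0 g.1 = c0 g
  have hac : AllCorrect g.1.1 := (absIn_iff_allCorrect hn1 hN g.1.2).mp g.2
  rw [greedy_correct hn1 hN R c0 g.1 hac g.2]
  rfl

/-- face with a prescribed asterisk set and all digits correct -/
def faceOfSet (s : Finset (Fin N)) : CubeFace N :=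
  fun i => if i ∈ s then none else some (decide (Odd ((s.filter (· < i)).card)))

lemma asts_faceOfSet (s : Finset (Fin N)) : asts (faceOfSet s) = s := by
  ext i
  rw [mem_asts]
  unfold faceOfSet
  by_cases hi : i ∈ s <;> simp [hi]

lemma isFace_faceOfSet {s : Finset (Fin N)} {k : ℕ} (hs : s.card = k) :
    IsFace k (faceOfSet s) := by
  rw [isFace_iff, asts_faceOfSet]
  exact hs

lemma below_faceOfSet (s : Finset (Fin N)) (i : Fin N) :
    below (faceOfSet s) i = ((s.filter (· < i)).card) := by
  unfold below
  congr 1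
  ext q
  simp only [Finset.mem_filter, Finset.mem_univ, true_and]
  constructor
  · rintro ⟨hlt, hnone⟩
    refine ⟨?_, hlt⟩
    by_contra hq
    unfold faceOfSet at hnone
    rw [if_neg hq] at hnone
    cases hnone
  · rintro ⟨hq, hlt⟩
    exact ⟨hlt, by unfold faceOfSet; rw [if_pos hq]⟩

lemma allCorrect_faceOfSet (s : Finset (Fin N)) : AllCorrect (faceOfSet s) := by
  intro i hi
  have hq : i ∉ s := by
    intro hc
    apply hi
    unfold faceOfSet
    rw [if_pos hc]
  have h1 : faceOfSet s i = some (decide (Odd ((s.filter (· < i)).card))) := by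
    unfold faceOfSet
    rw [if_neg hq]
  rw [h1, kappa_eq, below_faceOfSet]

/-- given an all-correct face, it is determined by its asterisk set -/
lemma faceOfSet_asts {g : CubeFace N} (hac : AllCorrect g) : faceOfSet (asts g) = g := by
  funext i
  by_cases hi : g i = none
  · unfold faceOfSet
    rw [if_pos (mem_asts.mpr hi), hi]
  · unfold faceOfSet
    rw [if_neg (fun hc => hi (mem_asts.mp hc))]
    have h1 := hac i hi
    have hb : below g i = ((asts g).filter (· < i)).card := by
      unfold below
      congr 1
      ext q
      simp only [Finset.mem_filter, Finset.mem_univ, true_and, mem_asts]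
      exact and_comm
    rw [h1, kappa_eq, hb]

/-- absolutely incoming faces correspond to their asterisk sets -/
noncomputable def absInEquiv (hn1 : 1 ≤ n) (hN : n ≤ N) :
    AbsIn N n ≃ {s : Finset (Fin N) // s.card = n - 1} where
  toFun g := ⟨asts g.1.1, g.1.2⟩
  invFun s := ⟨⟨faceOfSet s.1, isFace_faceOfSet s.2⟩,
    (absIn_iff_allCorrect hn1 hN (isFace_faceOfSet s.2)).mpr (allCorrect_faceOfSet s.1)⟩
  left_inv g := by
    have hac : AllCorrect g.1.1 := (absIn_iff_allCorrect hn1 hN g.1.2).mp g.2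
    apply Subtype.ext
    apply Subtype.ext
    show faceOfSet (asts g.1.1) = g.1.1
    exact faceOfSet_asts hac
  right_inv s := by
    apply Subtype.ext
    show asts (faceOfSet s.1) = s.1
    exact asts_faceOfSet s.1

instance : Finite (FaceT N k) := by
  unfold FaceT
  exact Subtype.finite

instance : Finite (AbsIn N n) := by
  unfold AbsIn
  exact Subtype.finite

lemma card_absIn (hn1 : 1 ≤ n) (hN : n ≤ N) :
    Nat.card (AbsIn N n) = N.choose (n - 1) := by
  have e1 := Nat.card_congr (absInEquiv hn1 hN)
  rw [e1, Nat.card_eq_fintype_card]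
  have e2 := Fintype.card_finset_len (α := Fin N) (n - 1)
  rw [e2, Fintype.card_fin]

end SQ
/-- If `X` is finite and `R` satisfies the set-theoretic `n`-simplex equation
(formulated as: every coloring of the absolutely incoming `(n-1)`-faces of `I^{n+1}`
extends to a permitted coloring of `I^{n+1}`), then for every `N ≥ n` the restriction
map from permitted colorings of `I^N` to colorings of the absolutely incoming
`(n-1)`-faces is a bijection; in particular the number of permitted colorings of `I^N`
is `|X| ^ (N.choose (n-1))`. -/
theorem stmt9 (n : ℕ) (hn : 2 ≤ n) (X : Type*) [Fintype X]
    (R : (Fin n → X) → (Fin n → X))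
    (hR : ∀ c0 : AbsIn (n + 1) n → X,
      ∃ c : FaceT (n + 1) (n - 1) → X, Permitted R c ∧ resAbs c = c0) :
    ∀ N : ℕ, n ≤ N →
      Function.Bijective
        (fun c : {c : FaceT N (n - 1) → X // Permitted R c} => resAbs c.1) ∧
      Nat.card {c : FaceT N (n - 1) → X // Permitted R c}
        = Fintype.card X ^ N.choose (n - 1) := by
  intro N hN
  have hn1 : 1 ≤ n := by omega
  obtain ⟨s, hs⟩ : ∃ s : Finset (Fin N), s.card = n - 1 := by
    obtain ⟨s, hsmem⟩ := Finset.powersetCard_nonempty.mpr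
      (show n - 1 ≤ (Finset.univ : Finset (Fin N)).card by
        rw [Finset.card_univ, Fintype.card_fin]; omega)
    exact ⟨s, (Finset.mem_powersetCard.mp hsmem).2⟩
  have absElt : AbsIn N n := ⟨⟨SQ.faceOfSet s, SQ.isFace_faceOfSet hs⟩,
    (SQ.absIn_iff_allCorrect hn1 hN (SQ.isFace_faceOfSet hs)).mpr
      (SQ.allCorrect_faceOfSet s)⟩
  have hbij : Function.Bijective
      (fun c : {c : FaceT N (n - 1) → X // Permitted R c} => resAbs c.1) := by
    constructor
    · intro c c' hcc
      apply Subtype.ext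
      apply SQ.permitted_unique hn1 R c.2 c'.2
      intro h hac
      have habs := (SQ.absIn_iff_allCorrect hn1 hN h.2).mpr hac
      exact congrFun hcc ⟨h, habs⟩
    · intro c0
      haveI : Nonempty X := ⟨c0 absElt⟩
      exact ⟨⟨SQ.greedy hn1 hN R c0, SQ.greedy_permitted hn1 hN R hR c0⟩,
        SQ.greedy_res hn1 hN R c0⟩
  refine ⟨hbij, ?_⟩
  rw [Nat.card_eq_of_bijective _ hbij, Nat.card_fun, SQ.card_absIn hn1 hN,
    Nat.card_eq_fintype_card]
end

section
/- For x, y, z with x = 2 + 5·m₁, y = 2 + 5·m₂, z = 2 + 5·m₃ in ℤ/25ℤ (m₁, m₂, m₃ integers), the element w = x + z + xyz is a unit in ℤ/25ℤ, and the electric map R(x,y,z) = (x·y·w⁻¹, w, y·z·w⁻¹) satisfies: x·y·w⁻¹ = 2 + 5·(m₁ + 2m₂ − 2), w = 2 + 5·(2 − m₂), and y·z·w⁻¹ = 2 + 5·(m₃ + 2m₂ − 2) in ℤ/25ℤ. In particular the electric map preserves the subset X = {x ∈ ℤ/25ℤ : x ≡ 2 mod 5}, and in the coordinates x_i = 2 +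 5n_i with n_i ∈ ℤ/5ℤ it is given by R(n₁,n₂,n₃) = (n₁ + 2n₂ − 2, 2 − n₂, n₃ + 2n₂ − 2). -/
set_option maxHeartbeats 1000000

private lemma electricAux (m₁ m₂ m₃ : ℤ) (x y z w : ZMod 25)
    (hx : x = 2 + 5 * (m₁ : ZMod 25))
    (hy : y = 2 + 5 * (m₂ : ZMod 25))
    (hz : z = 2 + 5 * (m₃ : ZMod 25))
    (hw : w = x + z + x * y * z) :
    IsUnit w ∧
    x * y * w⁻¹ = 2 + 5 * ((m₁ : ZMod 25) + 2 * (m₂ : ZMod 25) - 2) ∧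
    w = 2 + 5 * (2 - (m₂ : ZMod 25)) ∧
    y * z * w⁻¹ = 2 + 5 * ((m₃ : ZMod 25) + 2 * (m₂ : ZMod 25) - 2) := by
  have h25 : (25 : ZMod 25) = 0 := by decide
  set a : ZMod 25 := (m₁ : ZMod 25) with ha
  set b : ZMod 25 := (m₂ : ZMod 25) with hb
  set c : ZMod 25 := (m₃ : ZMod 25) with hc
  subst hx hy hz hw
  have hweq : (2 + 5*a) + (2 + 5*c) + (2 + 5*a)*(2 + 5*b)*(2 + 5*c)
      = 2 + 5 * (2 - b) := by
    linear_combination (a + b + c + 2*(a*b + b*c + a*c) + 5*a*b*c) * h25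
  have hu : ((2 + 5*a) + (2 + 5*c) + (2 + 5*a)*(2 + 5*b)*(2 + 5*c)) * (13 + 5*(2 - b)) = 1 := by
    linear_combination (11 + 23*c + 16*b + 41*b*c - 4*b^2 - 10*b^2*c + 23*a + 46*a*c
      + 41*a*b + 105*a*b*c - 10*a*b^2 - 25*a*b^2*c) * h25
  have hunit : IsUnit ((2 + 5*a) + (2 + 5*c) + (2 + 5*a)*(2 + 5*b)*(2 + 5*c)) :=
    IsUnit.of_mul_eq_one _ hu
  have hinv : ((2 + 5*a) + (2 + 5*c) + (2 + 5*a)*(2 + 5*b)*(2 + 5*c)) *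
      ((2 + 5*a) + (2 + 5*c) + (2 + 5*a)*(2 + 5*b)*(2 + 5*c))⁻¹ = 1 :=
    ZMod.mul_inv_of_unit _ hunit
  have hxy : (2 + 5*a) * (2 + 5*b) =
      (2 + 5*(a + 2*b - 2)) * ((2 + 5*a) + (2 + 5*c) + (2 + 5*a)*(2 + 5*b)*(2 + 5*c)) := by
    linear_combination ((4 + 8*c + 2*b + 6*b*c - 8*b^2 - 20*b^2*c + 6*a + 11*a*c + 3*a*b
      + 10*a*b*c - 20*a*b^2 - 50*a*b^2*c - 5*a^2 - 10*a^2*c - 10*a^2*b - 25*a^2*b*c)) * h25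
  have hyz : (2 + 5*b) * (2 + 5*c) =
      (2 + 5*(c + 2*b - 2)) * ((2 + 5*a) + (2 + 5*c) + (2 + 5*a)*(2 + 5*b)*(2 + 5*c)) := by
    linear_combination ((4 + 6*c - 5*c^2 + 2*b + 3*b*c - 10*b*c^2 - 8*b^2 - 20*b^2*c + 8*a
      + 11*a*c - 10*a*c^2 + 6*a*b + 10*a*b*c - 25*a*b*c^2 - 20*a*b^2 - 50*a*b^2*c)) * h25
  refine ⟨hunit, ?_, hweq, ?_⟩
  · calc (2 + 5*a) * (2 + 5*b) * ((2 + 5*a) + (2 + 5*c) + (2 + 5*a)*(2 + 5*b)*(2 + 5*c))⁻¹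
        = (2 + 5*(a + 2*b - 2)) * (((2 + 5*a) + (2 + 5*c) + (2 + 5*a)*(2 + 5*b)*(2 + 5*c)) *
          ((2 + 5*a) + (2 + 5*c) + (2 + 5*a)*(2 + 5*b)*(2 + 5*c))⁻¹) := by nth_rewrite 1 [hxy]; rw [mul_assoc]
      _ = 2 + 5*(a + 2*b - 2) := by rw [hinv, mul_one]
  · calc (2 + 5*b) * (2 + 5*c) * ((2 + 5*a) + (2 + 5*c) + (2 + 5*a)*(2 + 5*b)*(2 + 5*c))⁻¹
        = (2 + 5*(c + 2*b - 2)) * (((2 + 5*a) + (2 + 5*c) + (2 + 5*a)*(2 + 5*b)*(2 + 5*c)) *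
          ((2 + 5*a) + (2 + 5*c) + (2 + 5*a)*(2 + 5*b)*(2 + 5*c))⁻¹) := by nth_rewrite 1 [hyz]; rw [mul_assoc]
      _ = 2 + 5*(c + 2*b - 2) := by rw [hinv, mul_one]

private lemma electricLift (a : ZMod 25)
    (ha : ZMod.castHom (by norm_num : (5 : ℕ) ∣ 25) (ZMod 5) a = 2) :
    ∃ k : ℤ, a = 2 + 5 * (k : ZMod 25) := by
  have h1 : ((a.val : ℕ) : ZMod 25) = a := by
    rw [ZMod.natCast_val, ZMod.cast_id]
  have h2 : ((a.val : ℕ) : ZMod 5) = 2 := by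
    rw [← map_natCast (ZMod.castHom (by norm_num : (5 : ℕ) ∣ 25) (ZMod 5)) a.val, h1, ha]
  have h3 : a.val % 5 = 2 % 5 :=
    (ZMod.natCast_eq_natCast_iff a.val 2 5).mp (by rw [h2]; norm_num)
  obtain ⟨k, hk⟩ : ∃ k : ℕ, a.val = 2 + 5 * k := ⟨a.val / 5, by omega⟩
  refine ⟨(k : ℤ), ?_⟩
  rw [← h1, hk]
  push_cast
  ring

/-- In `ℤ/25ℤ`, for `x = 2 + 5m₁`, `y = 2 + 5m₂`, `z = 2 + 5m₃`, the element
`w = x + z + xyz` is a unit, and the electric map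
`R(x,y,z) = (x·y·w⁻¹, w, y·z·w⁻¹)` satisfies
`x·y·w⁻¹ = 2 + 5(m₁ + 2m₂ − 2)`, `w = 2 + 5(2 − m₂)`, `y·z·w⁻¹ = 2 + 5(m₃ + 2m₂ − 2)`.
In particular the electric map preserves the subset `X = {x : x ≡ 2 mod 5}` of
`ℤ/25ℤ`. -/
theorem stmt12 (m₁ m₂ m₃ : ℤ) (x y z w : ZMod 25)
    (hx : x = 2 + 5 * (m₁ : ZMod 25))
    (hy : y = 2 + 5 * (m₂ : ZMod 25))
    (hz : z = 2 + 5 * (m₃ : ZMod 25))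
    (hw : w = x + z + x * y * z) :
    IsUnit w ∧
    x * y * w⁻¹ = 2 + 5 * ((m₁ : ZMod 25) + 2 * (m₂ : ZMod 25) - 2) ∧
    w = 2 + 5 * (2 - (m₂ : ZMod 25)) ∧
    y * z * w⁻¹ = 2 + 5 * ((m₃ : ZMod 25) + 2 * (m₂ : ZMod 25) - 2) ∧
    (∀ a b c : ZMod 25,
      ZMod.castHom (by norm_num : (5 : ℕ) ∣ 25) (ZMod 5) a = 2 →
      ZMod.castHom (by norm_num : (5 : ℕ) ∣ 25) (ZMod 5) b = 2 →
      ZMod.castHom (by norm_num : (5 : ℕ) ∣ 25) (ZMod 5) c = 2 →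
        ZMod.castHom (by norm_num : (5 : ℕ) ∣ 25) (ZMod 5)
            (a * b * (a + c + a * b * c)⁻¹) = 2 ∧
        ZMod.castHom (by norm_num : (5 : ℕ) ∣ 25) (ZMod 5) (a + c + a * b * c) = 2 ∧
        ZMod.castHom (by norm_num : (5 : ℕ) ∣ 25) (ZMod 5)
            (b * c * (a + c + a * b * c)⁻¹) = 2) := by
  obtain ⟨hu, h1, h2, h3⟩ := electricAux m₁ m₂ m₃ x y z w hx hy hz hw
  have hmap : ∀ t : ZMod 25,
      ZMod.castHom (by norm_num : (5 : ℕ) ∣ 25) (ZMod 5) (2 + 5 * t) = 2 := by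
    intro t
    rw [map_add, map_mul]
    have h5 : (ZMod.castHom (by norm_num : (5 : ℕ) ∣ 25) (ZMod 5)) (5 : ZMod 25) = 0 := by
      decide
    have h2' : (ZMod.castHom (by norm_num : (5 : ℕ) ∣ 25) (ZMod 5)) (2 : ZMod 25) = 2 := by
      decide
    rw [h5, h2', zero_mul, add_zero]
  refine ⟨hu, h1, h2, h3, ?_⟩
  intro a b c ha hb hc
  obtain ⟨k₁, ha'⟩ := electricLift a ha
  obtain ⟨k₂, hb'⟩ := electricLift b hb
  obtain ⟨k₃, hc'⟩ := electricLift c hc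
  obtain ⟨_, g1, g2, g3⟩ := electricAux k₁ k₂ k₃ a b c (a + c + a * b * c) ha' hb' hc' rfl
  exact ⟨by rw [g1]; exact hmap _, by rw [g2]; exact hmap _, by rw [g3]; exact hmap _⟩
end

section
/- Over the real numbers, the function φ(x,y,z) = y is a multiplicative tetrahedral 3-cocycle for the electric map R(x,y,z) = (xy/w, w, yz/w), w = x + z + xyz. Explicitly: let a₁,…,a₆ ∈ ℝ and define (a₁',a₂',a₃') = R(a₁,a₂,a₃), (a₁'',a₄',a₅') = R(a₁',a₄,a₅), (a₂'',a₄'',a₆') = R(a₂',a₄',a₆), (a₃'',a₅'',a₆'') = R(a₃',a₅',a₆'), and also (b₃,b₅,b₆) = R(a₃,a₅,a₆), (b₂,b₄,c₆) = R(a₂,a₄,b₆), (b₁,c₄,c₅) = R(a₁,b₄,b₅), (c₁,c₂,c₃) = R(b₁,b₂,b₃); assume that in each of these eight applications of R the quantity x + z + xyz formed from the three arguments is nonzero. Then a₂ · a₄ · a₄' · a₅' = a₅ · a₄ · b₄ · b₂. -/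
/-- The denominator `w = x + z + xyz` of the electric map. -/
def elecW (x y z : ℝ) : ℝ := x + z + x * y * z

/-- The electric solution of the functional tetrahedron equation:
`R(x,y,z) = (xy/w, w, yz/w)` with `w = x + z + xyz`. -/
noncomputable def elecR (x y z : ℝ) : ℝ × ℝ × ℝ :=
  (x * y / elecW x y z, elecW x y z, y * z / elecW x y z)

/-- The function `φ(x,y,z) = y` is a multiplicative tetrahedral 3-cocycle for the
electric map: with the intermediate values defined by the left-hand-side and the
right-hand-side compositions (all eight denominators being nonzero), one has
`a₂ · a₄ · a₄' · a₅' = a₅ · a₄ · b₄ · b₂`. -/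
theorem stmt13
    (a1 a2 a3 a4 a5 a6 a1' a2' a3' a1'' a4' a5' a2'' a4'' a6' a3'' a5'' a6''
      b1 b2 b3 b4 b5 b6 c1 c2 c3 c4 c5 c6 : ℝ)
    (h1 : (a1', a2', a3') = elecR a1 a2 a3) (w1 : elecW a1 a2 a3 ≠ 0)
    (h2 : (a1'', a4', a5') = elecR a1' a4 a5) (w2 : elecW a1' a4 a5 ≠ 0)
    (h3 : (a2'', a4'', a6') = elecR a2' a4' a6) (w3 : elecW a2' a4' a6 ≠ 0)
    (h4 : (a3'', a5'', a6'') = elecR a3' a5' a6') (w4 : elecW a3' a5' a6' ≠ 0)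
    (h5 : (b3, b5, b6) = elecR a3 a5 a6) (w5 : elecW a3 a5 a6 ≠ 0)
    (h6 : (b2, b4, c6) = elecR a2 a4 b6) (w6 : elecW a2 a4 b6 ≠ 0)
    (h7 : (b1, c4, c5) = elecR a1 b4 b5) (w7 : elecW a1 b4 b5 ≠ 0)
    (h8 : (c1, c2, c3) = elecR b1 b2 b3) (w8 : elecW b1 b2 b3 ≠ 0) :
    a2 * a4 * a4' * a5' = a5 * a4 * b4 * b2 := by
  simp only [elecR, Prod.mk.injEq] at h2 h6
  obtain ⟨-, h2a, h2b⟩ := h2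
  obtain ⟨h6a, h6b, -⟩ := h6
  subst h2a h2b h6a h6b
  field_simp
end

section
/- Over the real numbers, the function φ(x,y,z) = x + z + xyz (the second component of the electric map) is a multiplicative tetrahedral 3-cocycle for the electric map R(x,y,z) = (xy/w, w, yz/w), w = x + z + xyz: for all a₁,…,a₆ ∈ ℝ such that in each of the eight applications of R occurring in the two compositions defining the intermediate values the quantity x + z + xyz formed from the three arguments is nonzero, one has φ(a₁,a₂,a₃)·φ(a₁',a₄,a₅)·φ(a₂',a₄',a₆)·φ(a₃',a₅',a₆') = φ(a₃,a₅,a₆)·φ(a₂,a₄,b₆)·φ(a₁,b₄,b₅)·φ(b₁,b₂,b₃). -/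
set_option maxHeartbeats 1000000


/-- The function `φ(x,y,z) = x + z + xyz` (the second component of the electric map)
is a multiplicative tetrahedral 3-cocycle for the electric map: with the intermediate
values defined by the left-hand-side and the right-hand-side compositions (all eight
denominators being nonzero), the multiplicative 3-cocycle identity holds for `φ`. -/
theorem stmt14
    (a1 a2 a3 a4 a5 a6 a1' a2' a3' a1'' a4' a5' a2'' a4'' a6' a3'' a5'' a6''
      b1 b2 b3 b4 b5 b6 c1 c2 c3 c4 c5 c6 : ℝ)
    (h1 : (a1', a2', a3') = elecR a1 a2 a3) (w1 : elecW a1 a2 a3 ≠ 0)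
    (h2 : (a1'', a4', a5') = elecR a1' a4 a5) (w2 : elecW a1' a4 a5 ≠ 0)
    (h3 : (a2'', a4'', a6') = elecR a2' a4' a6) (w3 : elecW a2' a4' a6 ≠ 0)
    (h4 : (a3'', a5'', a6'') = elecR a3' a5' a6') (w4 : elecW a3' a5' a6' ≠ 0)
    (h5 : (b3, b5, b6) = elecR a3 a5 a6) (w5 : elecW a3 a5 a6 ≠ 0)
    (h6 : (b2, b4, c6) = elecR a2 a4 b6) (w6 : elecW a2 a4 b6 ≠ 0)
    (h7 : (b1, c4, c5) = elecR a1 b4 b5) (w7 : elecW a1 b4 b5 ≠ 0)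
    (h8 : (c1, c2, c3) = elecR b1 b2 b3) (w8 : elecW b1 b2 b3 ≠ 0) :
    elecW a1 a2 a3 * elecW a1' a4 a5 * elecW a2' a4' a6 * elecW a3' a5' a6' =
      elecW a3 a5 a6 * elecW a2 a4 b6 * elecW a1 b4 b5 * elecW b1 b2 b3 := by
  simp only [elecR, Prod.mk.injEq] at h1 h2 h3 h5 h6 h7
  obtain ⟨ha1', ha2', ha3'⟩ := h1
  obtain ⟨-, ha4', ha5'⟩ := h2
  obtain ⟨-, -, ha6'⟩ := h3
  obtain ⟨hb3, hb5, hb6⟩ := h5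
  obtain ⟨hb2, hb4, -⟩ := h6
  obtain ⟨hb1, -, -⟩ := h7
  clear h4 h8 w4 w8
  have e1 : elecW a1 a2 a3 = (a1 + a3 + a1*a2*a3) := rfl
  have e5 : elecW a3 a5 a6 = (a3 + a6 + a3*a5*a6) := rfl
  have hw1 : ((a1 + a3 + a1*a2*a3) : ℝ) ≠ 0 := w1
  have hV1 : ((a3 + a6 + a3*a5*a6) : ℝ) ≠ 0 := w5
  have hW2' : (a1 + a3 + a1*a2*a3) * elecW a1' a4 a5 = (a1*a2 + (a1 + a3 + a1*a2*a3)*a5 + a1*a2*a4*a5) := by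
    rw [ha1', e1]
    simp only [elecW]
    generalize (a1 + a3 + a1*a2*a3) = D at hw1 ⊢
    field_simp
  have hW3' : elecW a2' a4' a6 = ((a1 + a3 + a1*a2*a3) + a6 + (a1*a2 + (a1 + a3 + a1*a2*a3)*a5 + a1*a2*a4*a5)*a6) := by
    rw [ha2', ha4']
    show (a1 + a3 + a1*a2*a3) + a6 + (a1 + a3 + a1*a2*a3) * elecW a1' a4 a5 * a6 = ((a1 + a3 + a1*a2*a3) + a6 + (a1*a2 + (a1 + a3 + a1*a2*a3)*a5 + a1*a2*a4*a5)*a6)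
    linear_combination a6 * hW2'
  have hT3 : (((a1 + a3 + a1*a2*a3) + a6 + (a1*a2 + (a1 + a3 + a1*a2*a3)*a5 + a1*a2*a4*a5)*a6) : ℝ) ≠ 0 := hW3' ▸ w3
  have hW4s : ((a1 + a3 + a1*a2*a3) * ((a1 + a3 + a1*a2*a3) + a6 + (a1*a2 + (a1 + a3 + a1*a2*a3)*a5 + a1*a2*a4*a5)*a6)) * elecW a3' a5' a6'
      = a2*a3*((a1 + a3 + a1*a2*a3) + a6 + (a1*a2 + (a1 + a3 + a1*a2*a3)*a5 + a1*a2*a4*a5)*a6) + (a1 + a3 + a1*a2*a3) * elecW a1' a4 a5 * a6 + a2*a3*a4*a5*a6 := by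
    rw [ha3', ha5', ha6', hW3', ha4', e1]
    show ((a1 + a3 + a1*a2*a3) * ((a1 + a3 + a1*a2*a3) + a6 + (a1*a2 + (a1 + a3 + a1*a2*a3)*a5 + a1*a2*a4*a5)*a6)) * (a2 * a3 / (a1 + a3 + a1*a2*a3) + elecW a1' a4 a5 * a6 / ((a1 + a3 + a1*a2*a3) + a6 + (a1*a2 + (a1 + a3 + a1*a2*a3)*a5 + a1*a2*a4*a5)*a6)
        + a2 * a3 / (a1 + a3 + a1*a2*a3) * (a4 * a5 / (elecW a1' a4 a5)) * (elecW a1' a4 a5 * a6 / ((a1 + a3 + a1*a2*a3) + a6 + (a1*a2 + (a1 + a3 + a1*a2*a3)*a5 + a1*a2*a4*a5)*a6)))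
      = a2*a3*((a1 + a3 + a1*a2*a3) + a6 + (a1*a2 + (a1 + a3 + a1*a2*a3)*a5 + a1*a2*a4*a5)*a6) + (a1 + a3 + a1*a2*a3) * elecW a1' a4 a5 * a6 + a2*a3*a4*a5*a6
    generalize ((a1 + a3 + a1*a2*a3) + a6 + (a1*a2 + (a1 + a3 + a1*a2*a3)*a5 + a1*a2*a4*a5)*a6) = T at hT3 ⊢
    generalize (a1 + a3 + a1*a2*a3) = D at hw1 ⊢
    field_simp
  have hLL : (a1 + a3 + a1*a2*a3) * (elecW a1 a2 a3 * elecW a1' a4 a5 * elecW a2' a4' a6 * elecW a3' a5' a6')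
      = (a1*a2 + (a1 + a3 + a1*a2*a3)*a5 + a1*a2*a4*a5) * (a2*a3*((a1 + a3 + a1*a2*a3) + a6 + (a1*a2 + (a1 + a3 + a1*a2*a3)*a5 + a1*a2*a4*a5)*a6) + (a1*a2 + (a1 + a3 + a1*a2*a3)*a5 + a1*a2*a4*a5)*a6 + a2*a3*a4*a5*a6) := by
    rw [e1, hW3']
    linear_combination (a2*a3*((a1 + a3 + a1*a2*a3) + a6 + (a1*a2 + (a1 + a3 + a1*a2*a3)*a5 + a1*a2*a4*a5)*a6) + a2*a3*a4*a5*a6 + ((a1 + a3 + a1*a2*a3) * elecW a1' a4 a5 + (a1*a2 + (a1 + a3 + a1*a2*a3)*a5 + a1*a2*a4*a5))*a6) * hW2'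
      + ((a1 + a3 + a1*a2*a3) * elecW a1' a4 a5) * hW4s
  have hV2' : (a3 + a6 + a3*a5*a6) * elecW a2 a4 b6 = (a2*(a3 + a6 + a3*a5*a6) + a5*a6 + a2*a4*a5*a6) := by
    rw [hb6, e5]
    simp only [elecW]
    generalize (a3 + a6 + a3*a5*a6) = V at hV1 ⊢
    field_simp
  have hV3' : elecW a1 b4 b5 = (a1 + (a3 + a6 + a3*a5*a6) + a1*(a2*(a3 + a6 + a3*a5*a6) + a5*a6 + a2*a4*a5*a6)) := by
    rw [hb4, hb5]
    show a1 + elecW a3 a5 a6 + a1 * elecW a2 a4 b6 * elecW a3 a5 a6 = (a1 + (a3 + a6 + a3*a5*a6) + a1*(a2*(a3 + a6 + a3*a5*a6) + a5*a6 + a2*a4*a5*a6))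
    linear_combination (1 + a1 * elecW a2 a4 b6) * e5 + a1 * hV2'
  have hU3 : ((a1 + (a3 + a6 + a3*a5*a6) + a1*(a2*(a3 + a6 + a3*a5*a6) + a5*a6 + a2*a4*a5*a6)) : ℝ) ≠ 0 := hV3' ▸ w7
  have hV4s : ((a3 + a6 + a3*a5*a6) * (a1 + (a3 + a6 + a3*a5*a6) + a1*(a2*(a3 + a6 + a3*a5*a6) + a5*a6 + a2*a4*a5*a6))) * elecW b1 b2 b3
      = a1 * elecW a2 a4 b6 * (a3 + a6 + a3*a5*a6) + a3*a5*(a1 + (a3 + a6 + a3*a5*a6) + a1*(a2*(a3 + a6 + a3*a5*a6) + a5*a6 + a2*a4*a5*a6)) + a1*a2*a3*a4*a5 := by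
    rw [hb1, hV3', hb4, hb2, hb3, e5]
    show ((a3 + a6 + a3*a5*a6) * (a1 + (a3 + a6 + a3*a5*a6) + a1*(a2*(a3 + a6 + a3*a5*a6) + a5*a6 + a2*a4*a5*a6))) * (a1 * elecW a2 a4 b6 / (a1 + (a3 + a6 + a3*a5*a6) + a1*(a2*(a3 + a6 + a3*a5*a6) + a5*a6 + a2*a4*a5*a6)) + a3 * a5 / (a3 + a6 + a3*a5*a6)
        + a1 * elecW a2 a4 b6 / (a1 + (a3 + a6 + a3*a5*a6) + a1*(a2*(a3 + a6 + a3*a5*a6) + a5*a6 + a2*a4*a5*a6)) * (a2 * a4 / elecW a2 a4 b6) * (a3 * a5 / (a3 + a6 + a3*a5*a6)))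
      = a1 * elecW a2 a4 b6 * (a3 + a6 + a3*a5*a6) + a3*a5*(a1 + (a3 + a6 + a3*a5*a6) + a1*(a2*(a3 + a6 + a3*a5*a6) + a5*a6 + a2*a4*a5*a6)) + a1*a2*a3*a4*a5
    generalize (a1 + (a3 + a6 + a3*a5*a6) + a1*(a2*(a3 + a6 + a3*a5*a6) + a5*a6 + a2*a4*a5*a6)) = U at hU3 ⊢
    generalize (a3 + a6 + a3*a5*a6) = V at hV1 ⊢
    field_simp
  have hRR : (a3 + a6 + a3*a5*a6) * (elecW a3 a5 a6 * elecW a2 a4 b6 * elecW a1 b4 b5 * elecW b1 b2 b3)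
      = (a2*(a3 + a6 + a3*a5*a6) + a5*a6 + a2*a4*a5*a6) * (a1*(a2*(a3 + a6 + a3*a5*a6) + a5*a6 + a2*a4*a5*a6) + a3*a5*(a1 + (a3 + a6 + a3*a5*a6) + a1*(a2*(a3 + a6 + a3*a5*a6) + a5*a6 + a2*a4*a5*a6)) + a1*a2*a3*a4*a5) := by
    rw [e5, hV3']
    linear_combination (a1*((a3 + a6 + a3*a5*a6) * elecW a2 a4 b6 + (a2*(a3 + a6 + a3*a5*a6) + a5*a6 + a2*a4*a5*a6)) + a3*a5*(a1 + (a3 + a6 + a3*a5*a6) + a1*(a2*(a3 + a6 + a3*a5*a6) + a5*a6 + a2*a4*a5*a6)) + a1*a2*a3*a4*a5) * hV2'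
      + ((a3 + a6 + a3*a5*a6) * elecW a2 a4 b6) * hV4s
  refine mul_left_cancel₀ (mul_ne_zero hw1 hV1) ?_
  linear_combination (a3 + a6 + a3*a5*a6) * hLL - (a1 + a3 + a1*a2*a3) * hRR
end

section
/- Let X be a set, k a field, R : X³ → X³ a map satisfying the set-theoretic tetrahedron equation, and φ : X³ → kˣ a multiplicative tetrahedral 3-cocycle for R. For each triple (i,j,l) with 1 ≤ i < j < l ≤ 6, let Φ_{φ,ijl} be the k-linear endomorphism of the free k-module on X⁶ sending the basis vector indexed by (a₁,…,a₆) to φ(a_i,a_j,a_l) times the basis vector indexed by the 6-tuple obtained by replacing the coordinates at positions i, j, l by the three components of R(a_i,a_j,a_l). Then Φ_{φ,123} ∘ Φ_{φ,145} ∘ Φ_{φ,246} ∘ Φ_{φ,356} = Φ_{φ,356} ∘ Φ_{φ,246} ∘ Φ_{φ,145} ∘ Φ_{φ,123} as endomorphisms of the free k-module on X⁶; i.e., the operator Φ_φ determined by Φ_φ(e_x ⊗ e_y ⊗ e_z) = φ(x,y,z)·e_{x'} ⊗ e_{y'} ⊗ e_{z'}, (x',y',z') = R(x,y,z), solves the quantum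 tetrahedron equation. -/
/-- `appR R i j l` applies the map `R : X³ → X³` to the `i`-th, `j`-th and `l`-th
coordinates of a point of `X⁶`, leaving the other coordinates fixed. -/
def appR {X : Type*} (R : X → X → X → X × X × X) (i j l : Fin 6)
    (a : Fin 6 → X) : Fin 6 → X :=
  fun m =>
    if m = i then (R (a i) (a j) (a l)).1
    else if m = j then (R (a i) (a j) (a l)).2.1
    else if m = l then (R (a i) (a j) (a l)).2.2
    else a m

/-- The set-theoretic tetrahedron equation for `R : X³ → X³`:
`R₁₂₃ ∘ R₁₄₅ ∘ R₂₄₆ ∘ R₃₅₆ = R₃₅₆ ∘ R₂₄₆ ∘ R₁₄₅ ∘ R₁₂₃` on `X⁶`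
(indices here are 0-based). -/
def STTE {X : Type*} (R : X → X → X → X × X × X) : Prop :=
  appR R 0 1 2 ∘ appR R 0 3 4 ∘ appR R 1 3 5 ∘ appR R 2 4 5 =
    appR R 2 4 5 ∘ appR R 1 3 5 ∘ appR R 0 3 4 ∘ appR R 0 1 2

/-- `φ : X³ → kˣ` is a multiplicative tetrahedral 3-cocycle for `R`: for all
`a₁, …, a₆`, with the intermediate values defined by the left-hand-side and
right-hand-side compositions of the tetrahedron relation,
`φ(a₁,a₂,a₃)φ(a₁',a₄,a₅)φ(a₂',a₄',a₆)φ(a₃',a₅',a₆') =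
 φ(a₃,a₅,a₆)φ(a₂,a₄,b₆)φ(a₁,b₄,b₅)φ(b₁,b₂,b₃)`. -/
def Cocycle3 {X : Type*} {k : Type*} [Field k]
    (R : X → X → X → X × X × X) (φ : X → X → X → kˣ) : Prop :=
  ∀ a1 a2 a3 a4 a5 a6 a1' a2' a3' a1'' a4' a5' a2'' a4'' a6' a3'' a5'' a6''
      b1 b2 b3 b4 b5 b6 c1 c2 c3 c4 c5 c6 : X,
    (a1', a2', a3') = R a1 a2 a3 → (a1'', a4', a5') = R a1' a4 a5 →
    (a2'', a4'', a6') = R a2' a4' a6 → (a3'', a5'', a6'') = R a3' a5' a6' →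
    (b3, b5, b6) = R a3 a5 a6 → (b2, b4, c6) = R a2 a4 b6 →
    (b1, c4, c5) = R a1 b4 b5 → (c1, c2, c3) = R b1 b2 b3 →
    φ a1 a2 a3 * φ a1' a4 a5 * φ a2' a4' a6 * φ a3' a5' a6' =
      φ a3 a5 a6 * φ a2 a4 b6 * φ a1 b4 b5 * φ b1 b2 b3

/-- The twisted permutation-type operator `Φ_{φ,ijl}` on the free `k`-module on `X⁶`:
it sends the basis vector indexed by `a` to `φ(a_i,a_j,a_l)` times the basis vector
indexed by the tuple obtained by replacing the coordinates at positions `i, j, l` of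
`a` by the components of `R(a_i, a_j, a_l)`. -/
noncomputable def PhiCoc {X : Type*} (k : Type*) [Field k]
    (R : X → X → X → X × X × X) (φ : X → X → X → kˣ) (i j l : Fin 6) :
    ((Fin 6 → X) →₀ k) →ₗ[k] ((Fin 6 → X) →₀ k) :=
  (Finsupp.lift ((Fin 6 → X) →₀ k) k (Fin 6 → X)) fun a =>
    ((φ (a i) (a j) (a l) : k)) • Finsupp.single (appR R i j l a) (1 : k)

lemma PhiCoc_single {X : Type*} (k : Type*) [Field k]
    (R : X → X → X → X × X × X) (φ : X → X → X → kˣ) (i j l : Fin 6)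
    (a : Fin 6 → X) (c : k) :
    PhiCoc k R φ i j l (Finsupp.single a c) =
      Finsupp.single (appR R i j l a) (c * φ (a i) (a j) (a l)) := by
  simp [PhiCoc, Finsupp.smul_single, smul_eq_mul, mul_comm]

/-- If `R` satisfies the set-theoretic tetrahedron equation and `φ` is a multiplicative
tetrahedral 3-cocycle for `R`, then the twisted operator `Φ_φ` solves the quantum
tetrahedron equation `Φ₁₂₃ Φ₁₄₅ Φ₂₄₆ Φ₃₅₆ = Φ₃₅₆ Φ₂₄₆ Φ₁₄₅ Φ₁₂₃`. -/
theorem stmt16 (X : Type*) (k : Type*) [Field k]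
    (R : X → X → X → X × X × X) (hR : STTE R)
    (φ : X → X → X → kˣ) (hφ : Cocycle3 R φ) :
    (PhiCoc k R φ 0 1 2).comp ((PhiCoc k R φ 0 3 4).comp
        ((PhiCoc k R φ 1 3 5).comp (PhiCoc k R φ 2 4 5))) =
      (PhiCoc k R φ 2 4 5).comp ((PhiCoc k R φ 1 3 5).comp
        ((PhiCoc k R φ 0 3 4).comp (PhiCoc k R φ 0 1 2))) := by
  apply Finsupp.lhom_ext
  intro a c
  simp only [LinearMap.comp_apply, PhiCoc_single]
  have hT : appR R 0 1 2 (appR R 0 3 4 (appR R 1 3 5 (appR R 2 4 5 a))) =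
      appR R 2 4 5 (appR R 1 3 5 (appR R 0 3 4 (appR R 0 1 2 a))) :=
    congrFun hR a
  rw [hT]
  congr 1
  simp (config := { decide := true }) only [appR, if_true, if_false]
  have hE := hφ (a 0) (a 1) (a 2) (a 3) (a 4) (a 5)
    (R (a 0) (a 1) (a 2)).1 (R (a 0) (a 1) (a 2)).2.1 (R (a 0) (a 1) (a 2)).2.2
    (R (R (a 0) (a 1) (a 2)).1 (a 3) (a 4)).1
    (R (R (a 0) (a 1) (a 2)).1 (a 3) (a 4)).2.1
    (R (R (a 0) (a 1) (a 2)).1 (a 3) (a 4)).2.2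
    (R (R (a 0) (a 1) (a 2)).2.1 (R (R (a 0) (a 1) (a 2)).1 (a 3) (a 4)).2.1 (a 5)).1
    (R (R (a 0) (a 1) (a 2)).2.1 (R (R (a 0) (a 1) (a 2)).1 (a 3) (a 4)).2.1 (a 5)).2.1
    (R (R (a 0) (a 1) (a 2)).2.1 (R (R (a 0) (a 1) (a 2)).1 (a 3) (a 4)).2.1 (a 5)).2.2
    (R (R (a 0) (a 1) (a 2)).2.2 (R (R (a 0) (a 1) (a 2)).1 (a 3) (a 4)).2.2
      (R (R (a 0) (a 1) (a 2)).2.1 (R (R (a 0) (a 1) (a 2)).1 (a 3) (a 4)).2.1 (a 5)).2.2).1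
    (R (R (a 0) (a 1) (a 2)).2.2 (R (R (a 0) (a 1) (a 2)).1 (a 3) (a 4)).2.2
      (R (R (a 0) (a 1) (a 2)).2.1 (R (R (a 0) (a 1) (a 2)).1 (a 3) (a 4)).2.1 (a 5)).2.2).2.1
    (R (R (a 0) (a 1) (a 2)).2.2 (R (R (a 0) (a 1) (a 2)).1 (a 3) (a 4)).2.2
      (R (R (a 0) (a 1) (a 2)).2.1 (R (R (a 0) (a 1) (a 2)).1 (a 3) (a 4)).2.1 (a 5)).2.2).2.2
    (R (a 0) (R (a 1) (a 3) (R (a 2) (a 4) (a 5)).2.2).2.1 (R (a 2) (a 4) (a 5)).2.1).1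
    (R (a 1) (a 3) (R (a 2) (a 4) (a 5)).2.2).1
    (R (a 2) (a 4) (a 5)).1
    (R (a 1) (a 3) (R (a 2) (a 4) (a 5)).2.2).2.1
    (R (a 2) (a 4) (a 5)).2.1
    (R (a 2) (a 4) (a 5)).2.2
    (R (R (a 0) (R (a 1) (a 3) (R (a 2) (a 4) (a 5)).2.2).2.1 (R (a 2) (a 4) (a 5)).2.1).1
      (R (a 1) (a 3) (R (a 2) (a 4) (a 5)).2.2).1 (R (a 2) (a 4) (a 5)).1).1
    (R (R (a 0) (R (a 1) (a 3) (R (a 2) (a 4) (a 5)).2.2).2.1 (R (a 2) (a 4) (a 5)).2.1).1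
      (R (a 1) (a 3) (R (a 2) (a 4) (a 5)).2.2).1 (R (a 2) (a 4) (a 5)).1).2.1
    (R (R (a 0) (R (a 1) (a 3) (R (a 2) (a 4) (a 5)).2.2).2.1 (R (a 2) (a 4) (a 5)).2.1).1
      (R (a 1) (a 3) (R (a 2) (a 4) (a 5)).2.2).1 (R (a 2) (a 4) (a 5)).1).2.2
    (R (a 0) (R (a 1) (a 3) (R (a 2) (a 4) (a 5)).2.2).2.1 (R (a 2) (a 4) (a 5)).2.1).2.1
    (R (a 0) (R (a 1) (a 3) (R (a 2) (a 4) (a 5)).2.2).2.1 (R (a 2) (a 4) (a 5)).2.1).2.2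
    (R (a 1) (a 3) (R (a 2) (a 4) (a 5)).2.2).2.2
    (by simp) (by simp) (by simp) (by simp) (by simp) (by simp) (by simp) (by simp)
  have hE' := congrArg (Units.val) hE
  simp only [Units.val_mul] at hE'
  linear_combination c * hE'.symm
end

section
/- Let p be a prime with p ≡ 1 (mod 4) or p = 2, let k ≥ 2 be an integer, and let ε ∈ ℤ/pℤ satisfy ε² = −1. Let X = {x ∈ ℤ/p^kℤ : the image of x under the reduction homomorphism ℤ/p^kℤ → ℤ/pℤ equals ε}. Then for all x, y, z ∈ X: (1) w = x + z + xyz is a unit of ℤ/p^kℤ; (2) the triple (x·y·w⁻¹, w, y·z·w⁻¹) again lies in X³; and (3) the resulting map R : X³ → X³, R(x,y,z) = (xy·w⁻¹, w, yz·w⁻¹), is a bijection of X³ onto itself. -/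
/-- Let `p` be a prime with `p ≡ 1 (mod 4)` or `p = 2`, let `k ≥ 2`, and let
`ε ∈ ℤ/pℤ` satisfy `ε² = −1`.  On the subset `X ⊆ ℤ/p^kℤ` of elements reducing to `ε`
modulo `p`: (1) the denominator `w = x + z + xyz` of the electric map is a unit;
(2) the electric map `(x,y,z) ↦ (xy·w⁻¹, w, yz·w⁻¹)` sends `X³` into `X³`; and
(3) it restricts to a bijection of `X³` onto itself. -/
theorem stmt18 (p : ℕ) (hp : p.Prime) (hp4 : p % 4 = 1 ∨ p = 2)
    (k : ℕ) (hk : 2 ≤ k) (ε : ZMod p) (hε : ε ^ 2 = -1)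
    (red : ZMod (p ^ k) →+* ZMod p)
    (hred : red = ZMod.castHom (dvd_pow_self p (by omega : k ≠ 0)) (ZMod p)) :
    (∀ x y z : ZMod (p ^ k), red x = ε → red y = ε → red z = ε →
      IsUnit (x + z + x * y * z) ∧
      red (x * y * (x + z + x * y * z)⁻¹) = ε ∧
      red (x + z + x * y * z) = ε ∧
      red (y * z * (x + z + x * y * z)⁻¹) = ε) ∧
    (∃ R : {t : ZMod (p ^ k) × ZMod (p ^ k) × ZMod (p ^ k) //
              red t.1 = ε ∧ red t.2.1 = ε ∧ red t.2.2 = ε} →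
           {t : ZMod (p ^ k) × ZMod (p ^ k) × ZMod (p ^ k) //
              red t.1 = ε ∧ red t.2.1 = ε ∧ red t.2.2 = ε},
      Function.Bijective R ∧
      ∀ t, (R t).val.1
              = t.val.1 * t.val.2.1 *
                  (t.val.1 + t.val.2.2 + t.val.1 * t.val.2.1 * t.val.2.2)⁻¹ ∧
           (R t).val.2.1
              = t.val.1 + t.val.2.2 + t.val.1 * t.val.2.1 * t.val.2.2 ∧
           (R t).val.2.2
              = t.val.2.1 * t.val.2.2 *
                  (t.val.1 + t.val.2.2 + t.val.1 * t.val.2.1 * t.val.2.2)⁻¹) := by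
  haveI : Fact p.Prime := ⟨hp⟩
  haveI : NeZero (p ^ k) := ⟨pow_ne_zero k hp.pos.ne'⟩
  have hεne : ε ≠ 0 := by
    intro h; rw [h] at hε; simp at hε
  -- every element of X is a unit
  have unit_of : ∀ x : ZMod (p ^ k), red x = ε → IsUnit x := by
    intro x hx
    rw [hred] at hx
    have hx0 : (x.val : ZMod p) ≠ 0 := by
      rw [ZMod.natCast_val]
      rw [ZMod.castHom_apply] at hx
      rw [hx]; exact hεne
    rw [Ne, ZMod.natCast_eq_zero_iff] at hx0
    have : IsUnit ((x.val : ℕ) : ZMod (p ^ k)) := by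
      rw [ZMod.isUnit_iff_coprime]
      exact Nat.Coprime.pow_right k ((Nat.Prime.coprime_iff_not_dvd hp).mpr hx0).symm
    rwa [ZMod.natCast_val, ZMod.cast_id] at this
  -- reduction of inverses
  have hinv : ∀ w : ZMod (p ^ k), red w = ε → red w⁻¹ = -ε := by
    intro w hw
    have hu := unit_of w hw
    have h1 : w * w⁻¹ = 1 := ZMod.mul_inv_of_unit w hu
    have h2 := congrArg red h1
    rw [map_mul, map_one, hw] at h2
    have hε' : ε * (-ε) = 1 := by linear_combination -hε
    exact mul_left_cancel₀ hεne (h2.trans hε'.symm)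
  have main : ∀ x y z : ZMod (p ^ k), red x = ε → red y = ε → red z = ε →
      IsUnit (x + z + x * y * z) ∧
      red (x * y * (x + z + x * y * z)⁻¹) = ε ∧
      red (x + z + x * y * z) = ε ∧
      red (y * z * (x + z + x * y * z)⁻¹) = ε := by
    intro x y z hx hy hz
    have hw : red (x + z + x * y * z) = ε := by
      rw [map_add, map_add, map_mul, map_mul, hx, hy, hz]
      linear_combination ε * hε
    have hu := unit_of _ hw
    have hi := hinv _ hw
    refine ⟨hu, ?_, hw, ?_⟩
    · rw [map_mul, map_mul, hx, hy, hi]; linear_combination -ε * hε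
    · rw [map_mul, map_mul, hy, hz, hi]; linear_combination -ε * hε
  refine ⟨main, ?_⟩
  refine ⟨fun t => ⟨(t.val.1 * t.val.2.1 *
      (t.val.1 + t.val.2.2 + t.val.1 * t.val.2.1 * t.val.2.2)⁻¹,
      t.val.1 + t.val.2.2 + t.val.1 * t.val.2.1 * t.val.2.2,
      t.val.2.1 * t.val.2.2 *
      (t.val.1 + t.val.2.2 + t.val.1 * t.val.2.1 * t.val.2.2)⁻¹),
      (main _ _ _ t.2.1 t.2.2.1 t.2.2.2).2.1,
      (main _ _ _ t.2.1 t.2.2.1 t.2.2.2).2.2.1,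
      (main _ _ _ t.2.1 t.2.2.1 t.2.2.2).2.2.2⟩, ?_, fun t => ⟨rfl, rfl, rfl⟩⟩
  apply Function.Involutive.bijective
  rintro ⟨⟨x, y, z⟩, hx, hy, hz⟩
  apply Subtype.ext
  dsimp only
  have hw1 : (x + z + x * y * z) * (x + z + x * y * z)⁻¹ = 1 :=
    ZMod.mul_inv_of_unit _ (main _ _ _ hx hy hz).1
  have hy1 : y * y⁻¹ = 1 := ZMod.mul_inv_of_unit _ (unit_of y hy)
  have hkey : x * y * (x + z + x * y * z)⁻¹ + y * z * (x + z + x * y * z)⁻¹ +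
      x * y * (x + z + x * y * z)⁻¹ * (x + z + x * y * z) *
        (y * z * (x + z + x * y * z)⁻¹) = y := by
    linear_combination (y + x * y * y * z * (x + z + x * y * z)⁻¹) * hw1
  rw [hkey]
  refine Prod.ext ?_ (Prod.ext rfl ?_)
  · show x * y * (x + z + x * y * z)⁻¹ * (x + z + x * y * z) * y⁻¹ = x
    linear_combination (x * y * y⁻¹) * hw1 + x * hy1
  · show (x + z + x * y * z) * (y * z * (x + z + x * y * z)⁻¹) * y⁻¹ = z
    linear_combination (z * y * y⁻¹) * hw1 + z * hy1
end
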